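/- arXiv:1812.08557 — 4 statements merged into one kernel-verified Lean document; each statement's English description precedes it below -/
import Mathlib

section
/- Fix s ≥ 0. There exists a constant κ₁ > 0 such that for every nonempty open bounded set E ⊆ ℝ^d there exists a Borel probability measure η on ℝ^d which is absolutely continuous with respect to Lebesgue measure with essentially bounded density, whose support is a finite union of pairwise disjoint d-dimensional closed cubes contained in E, and which satisfies φ^s(E) ≤ κ₁ · inf_{x∈E} inf_{r>0} r^s / η(E ∩ B_r(x)). -/
open MeasureTheory Metric Set Filter ENNReal

/-- `limsup` of a sequence of sets: `⋂ n, ⋃ i ≥ n, A i`. -/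
def slimsup {X : Type*} (A : ℕ → Set X) : Set X :=
  ⋂ n, ⋃ i, ⋃ (_ : n ≤ i), A i

/-- The unit cube `[0,1]^d` in `ℝ^d`. -/
def unitCube (d : ℕ) : Set (EuclideanSpace ℝ (Fin d)) :=
  {x | ∀ i, x i ∈ Set.Icc (0 : ℝ) 1}

/-- The generalized singular value function
`φ^s(E) = sup_μ inf_{x ∈ E} inf_{r > 0} r^s / μ(B_r(x))`,
the supremum over Borel probability measures carried by `E`. -/
noncomputable def phi {d : ℕ} (s : ℝ) (E : Set (EuclideanSpace ℝ (Fin d))) : ℝ≥0∞ :=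
  ⨆ (μ : Measure (EuclideanSpace ℝ (Fin d))) (_ : IsProbabilityMeasure μ) (_ : μ Eᶜ = 0),
    ⨅ (x : EuclideanSpace ℝ (Fin d)) (_ : x ∈ E) (r : ℝ) (_ : 0 < r),
      ENNReal.ofReal (r ^ s) / μ (closedBall x r)

/-- Axis-parallel closed cube with center `z` and half-side `h`. -/
def cube {d : ℕ} (z : EuclideanSpace ℝ (Fin d)) (h : ℝ) : Set (EuclideanSpace ℝ (Fin d)) :=
  {x | ∀ i, |x i - z i| ≤ h}

/-- Topological support of a measure: points all of whose open neighbourhoods have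
positive measure. -/
def msupport {X : Type*} [TopologicalSpace X] [MeasurableSpace X]
    (μ : Measure X) : Set X :=
  {x | ∀ U : Set X, IsOpen U → x ∈ U → 0 < μ U}

/-! ### Auxiliary geometric lemmas -/

section Aux

variable {d : ℕ}

lemma ES.abs_coord_le_norm (v : EuclideanSpace ℝ (Fin d)) (i : Fin d) : |v i| ≤ ‖v‖ := by
  rw [EuclideanSpace.norm_eq, ← Real.sqrt_sq_eq_abs]
  apply Real.sqrt_le_sqrt
  have : |v i|^2 ≤ ∑ j, ‖v j‖^2 := by
    apply Finset.single_le_sum (f := fun j => ‖v j‖^2) (fun j _ => by positivity)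
      (Finset.mem_univ i) |>.trans_eq' ?_
    simp [sq_abs]
  simpa [sq_abs] using this

lemma ES.norm_le_sqrt_mul (v : EuclideanSpace ℝ (Fin d)) {c : ℝ} (hc : 0 ≤ c)
    (h : ∀ i, |v i| ≤ c) : ‖v‖ ≤ Real.sqrt d * c := by
  rw [EuclideanSpace.norm_eq]
  have h1 : ∑ j, ‖v j‖^2 ≤ (d : ℝ) * c^2 := by
    calc ∑ j, ‖v j‖^2 ≤ ∑ _j : Fin d, c^2 := by
          apply Finset.sum_le_sum
          intro j _
          have := h j
          rw [Real.norm_eq_abs]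
          nlinarith [abs_nonneg (v j)]
      _ = (d : ℝ) * c^2 := by simp [Finset.sum_const, mul_comm]
  calc Real.sqrt (∑ j, ‖v j‖^2) ≤ Real.sqrt ((d:ℝ) * c^2) := Real.sqrt_le_sqrt h1
    _ = Real.sqrt d * c := by
        rw [Real.sqrt_mul (by positivity), Real.sqrt_sq hc]

lemma dist_le_of_coords {x y : EuclideanSpace ℝ (Fin d)} {c : ℝ} (hc : 0 ≤ c)
    (h : ∀ i, |x i - y i| ≤ c) : dist x y ≤ Real.sqrt d * c := by
  rw [dist_eq_norm]
  apply ES.norm_le_sqrt_mul _ hc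
  intro i
  simpa [PiLp.sub_apply] using h i

lemma coord_le_dist (x y : EuclideanSpace ℝ (Fin d)) (i : Fin d) :
    |x i - y i| ≤ dist x y := by
  rw [dist_eq_norm]
  simpa [PiLp.sub_apply] using ES.abs_coord_le_norm (x - y) i

lemma cube_eq_preimage (z : EuclideanSpace ℝ (Fin d)) (h : ℝ) :
    cube z h = ((MeasurableEquiv.toLp 2 (Fin d → ℝ)).symm) ⁻¹'
      (Set.univ.pi fun i => Icc (z i - h) (z i + h)) := by
  ext x
  simp only [cube, mem_setOf_eq, mem_preimage, Set.mem_pi, mem_univ, forall_true_left, mem_Icc]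
  have hx : ∀ i, ((MeasurableEquiv.toLp 2 (Fin d → ℝ)).symm) x i = x i := fun i => rfl
  constructor
  · intro h' i
    have := h' i
    rw [abs_sub_le_iff] at this
    rw [hx i]
    constructor <;> [linarith [this.2]; linarith [this.1]]
  · intro h' i
    have := h' i
    rw [hx i] at this
    rw [abs_sub_le_iff]
    constructor <;> [linarith [this.2]; linarith [this.1]]

lemma volume_cube (z : EuclideanSpace ℝ (Fin d)) {h : ℝ} (hh : 0 ≤ h) :
    volume (cube z h) = (ENNReal.ofReal (2*h))^d := by
  rw [cube_eq_preimage]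
  rw [(EuclideanSpace.volume_preserving_symm_measurableEquiv_toLp (Fin d)).measure_preimage
    (by measurability)]
  rw [volume_pi_pi]
  simp only [Real.volume_Icc]
  have : ∀ i : Fin d, ENNReal.ofReal (z i + h - (z i - h)) = ENNReal.ofReal (2*h) := by
    intro i; ring_nf
  rw [Finset.prod_congr rfl (fun i _ => this i)]
  simp

lemma cube_isClosed (z : EuclideanSpace ℝ (Fin d)) (h : ℝ) : IsClosed (cube z h) := by
  have : cube z h = ⋂ i, {x : EuclideanSpace ℝ (Fin d) | |x i - z i| ≤ h} := by
    ext x; simp [cube]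
  rw [this]
  apply isClosed_iInter
  intro i
  have hc : Continuous fun x : EuclideanSpace ℝ (Fin d) => |x i - z i| := by
    apply Continuous.abs
    exact ((EuclideanSpace.proj i : EuclideanSpace ℝ (Fin d) →L[ℝ] ℝ).continuous).sub
      continuous_const
  exact isClosed_le hc continuous_const

lemma cube_measurableSet (z : EuclideanSpace ℝ (Fin d)) (h : ℝ) :
    MeasurableSet (cube z h) := (cube_isClosed z h).measurableSet

lemma closedBall_subset_cube (x : EuclideanSpace ℝ (Fin d)) (r : ℝ) :
    closedBall x r ⊆ cube x r := by
  intro y hy i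
  calc |y i - x i| ≤ dist y x := coord_le_dist y x i
    _ ≤ r := mem_closedBall.1 hy

lemma volume_inter_cube_pos {z x : EuclideanSpace ℝ (Fin d)} {h : ℝ} (hh : 0 < h)
    {U : Set (EuclideanSpace ℝ (Fin d))} (hU : IsOpen U) (hx : x ∈ U) (hxc : x ∈ cube z h) :
    0 < volume (U ∩ cube z h) := by
  obtain ⟨ε, hε, hball⟩ := Metric.isOpen_iff.1 hU x hx
  set t : ℝ := min 1 (ε / (2 * h * Real.sqrt d + 1)) with ht_def
  have hsd : (0:ℝ) ≤ Real.sqrt d := Real.sqrt_nonneg _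
  have ht0 : 0 < t := by
    apply lt_min one_pos
    apply div_pos hε
    positivity
  have ht1 : t ≤ 1 := min_le_left _ _
  set x' : EuclideanSpace ℝ (Fin d) := x + t • (z - x) with hx'_def
  have hx'c : ∀ i, |x' i - z i| ≤ (1-t) * h := by
    intro i
    have : x' i - z i = (1-t) * (x i - z i) := by
      simp only [hx'_def, PiLp.add_apply, PiLp.smul_apply, PiLp.sub_apply, smul_eq_mul]
      ring
    rw [this, abs_mul, abs_of_nonneg (by linarith : (0:ℝ) ≤ 1 - t)]
    have := hxc i
    nlinarith [abs_nonneg (x i - z i)]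
  have hsub1 : cube x' (t*h) ⊆ cube z h := by
    intro y hy i
    have h1 := hy i
    have h2 := hx'c i
    calc |y i - z i| ≤ |y i - x' i| + |x' i - z i| := abs_sub_le _ _ _
      _ ≤ t*h + (1-t)*h := add_le_add h1 h2
      _ = h := by ring
  have hsub2 : cube x' (t*h) ⊆ ball x ε := by
    intro y hy
    rw [mem_ball]
    have hyx : ∀ i, |y i - x i| ≤ t*h + t*h := by
      intro i
      have h1 := hy i
      have h2 : |x' i - x i| ≤ t * h := by
        have : x' i - x i = t * (z i - x i) := by
          simp only [hx'_def, PiLp.add_apply, PiLp.smul_apply, PiLp.sub_apply, smul_eq_mul]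
          ring
        rw [this, abs_mul, abs_of_nonneg ht0.le]
        have := hxc i
        rw [abs_sub_comm] at this
        nlinarith
      calc |y i - x i| ≤ |y i - x' i| + |x' i - x i| := abs_sub_le _ _ _
        _ ≤ t*h + t*h := add_le_add h1 h2
    have := dist_le_of_coords (by positivity) hyx
    calc dist y x ≤ Real.sqrt d * (t*h + t*h) := this
      _ = t * (2 * h * Real.sqrt d) := by ring
      _ ≤ (ε / (2 * h * Real.sqrt d + 1)) * (2 * h * Real.sqrt d) := by
          apply mul_le_mul_of_nonneg_right (min_le_right _ _) (by positivity)
      _ < ε := by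
          rw [div_mul_eq_mul_div, div_lt_iff₀ (by positivity)]
          nlinarith
  calc (0:ℝ≥0∞) < volume (cube x' (t*h)) := by
        rw [volume_cube x' (by positivity)]
        apply ENNReal.pow_pos
        simp only [ENNReal.ofReal_pos]
        positivity
    _ ≤ volume (U ∩ cube z h) := by
        apply measure_mono
        intro y hy
        exact ⟨hball (hsub2 hy), hsub1 hy⟩

end Aux

/-! ### The basic construction of the absolutely continuous measure -/

section Eta

variable {d : ℕ}

lemma exists_eta {ι : Type} [DecidableEq ι] (S : Finset ι)
    (z : ι → EuclideanSpace ℝ (Fin d)) (hl : ℝ) (hl0 : 0 < hl)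
    (w : ι → ℝ≥0∞) (hw0 : ∀ k ∈ S, 0 < w k) (hwsum : ∑ k ∈ S, w k = 1) :
    ∃ η : Measure (EuclideanSpace ℝ (Fin d)),
      IsProbabilityMeasure η ∧
      (∃ f, (∃ C, C ≠ ⊤ ∧ ∀ x, f x ≤ C) ∧ η = volume.withDensity f) ∧
      msupport η = ⋃ k ∈ S, cube (z k) hl ∧
      ∀ T : Set (EuclideanSpace ℝ (Fin d)), MeasurableSet T →
        η T = ∑ k ∈ S, (w k / (ENNReal.ofReal (2*hl))^d) * volume (T ∩ cube (z k) hl) := by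
  set V : ℝ≥0∞ := (ENNReal.ofReal (2*hl))^d with hV
  have hV0 : V ≠ 0 := by
    apply pow_ne_zero
    simp only [ne_eq, ENNReal.ofReal_eq_zero, not_le]
    linarith
  have hVtop : V ≠ ⊤ := by
    apply ENNReal.pow_ne_top
    exact ENNReal.ofReal_ne_top
  have hwtop : ∀ k ∈ S, w k ≠ ⊤ := by
    intro k hk
    have : w k ≤ 1 := hwsum ▸ Finset.single_le_sum (f := w) (fun _ _ => zero_le) hk
    exact (this.trans_lt ENNReal.one_lt_top).ne
  set f : EuclideanSpace ℝ (Fin d) → ℝ≥0∞ :=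
    fun x => ∑ k ∈ S, (w k / V) * (cube (z k) hl).indicator 1 x with hf
  have hfmeas : ∀ k, Measurable fun x => (w k / V) * (cube (z k) hl).indicator
      (1 : EuclideanSpace ℝ (Fin d) → ℝ≥0∞) x := by
    intro k
    exact (measurable_const.indicator (cube_measurableSet _ _)).const_mul _
  set η : Measure (EuclideanSpace ℝ (Fin d)) := volume.withDensity f with hη
  have happly : ∀ T : Set (EuclideanSpace ℝ (Fin d)), MeasurableSet T →
      η T = ∑ k ∈ S, (w k / V) * volume (T ∩ cube (z k) hl) := by
    intro T hT
    rw [hη, withDensity_apply _ hT, hf]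
    rw [lintegral_finset_sum _ (fun k _ => hfmeas k)]
    apply Finset.sum_congr rfl
    intro k hk
    rw [lintegral_const_mul' _ _ (ENNReal.div_lt_top (hwtop k hk) hV0).ne]
    congr 1
    rw [lintegral_indicator_one (cube_measurableSet _ _)]
    rw [Measure.restrict_apply (cube_measurableSet _ _), Set.inter_comm]
  have hprob : IsProbabilityMeasure η := by
    constructor
    rw [happly _ MeasurableSet.univ]
    have : ∀ k ∈ S, (w k / V) * volume (univ ∩ cube (z k) hl) = w k := by
      intro k _
      rw [Set.univ_inter, volume_cube _ hl0.le, ← hV]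
      exact ENNReal.div_mul_cancel hV0 hVtop
    rw [Finset.sum_congr rfl this, hwsum]
  refine ⟨η, hprob, ⟨f, ⟨1/V, ?_, ?_⟩, rfl⟩, ?_, happly⟩
  · exact (ENNReal.div_lt_top one_ne_top hV0).ne
  · intro x
    rw [hf]
    calc ∑ k ∈ S, (w k / V) * (cube (z k) hl).indicator 1 x
        ≤ ∑ k ∈ S, (w k / V) := by
          apply Finset.sum_le_sum
          intro k _
          apply mul_le_of_le_one_right (zero_le)
          exact Set.indicator_le_self' (fun _ _ => zero_le_one) x |>.trans le_rfl
      _ = (∑ k ∈ S, w k) / V := by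
          simp only [div_eq_mul_inv, ← Finset.sum_mul]
      _ = 1 / V := by rw [hwsum]
  · -- msupport
    ext x
    simp only [msupport, mem_setOf_eq, mem_iUnion]
    constructor
    · intro hx
      by_contra hnot
      push_neg at hnot
      have hclosed : IsClosed (⋃ k ∈ S, cube (z k) hl) := by
        apply Set.Finite.isClosed_biUnion S.finite_toSet
        intro k _
        exact cube_isClosed _ _
      have hxnot : x ∈ (⋃ k ∈ S, cube (z k) hl)ᶜ := by
        simp only [mem_compl_iff, mem_iUnion, not_exists]
        exact fun k hk hc => hnot k hk hc
      have := hx _ hclosed.isOpen_compl hxnot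
      rw [happly _ hclosed.measurableSet.compl] at this
      have hz : ∀ k ∈ S, (w k / V) * volume ((⋃ k ∈ S, cube (z k) hl)ᶜ ∩ cube (z k) hl) = 0 := by
        intro k hk
        have : (⋃ k ∈ S, cube (z k) hl)ᶜ ∩ cube (z k) hl = ∅ := by
          ext y
          simp only [mem_inter_iff, mem_compl_iff, mem_iUnion, mem_empty_iff_false, iff_false,
            not_and]
          intro hy hyc
          exact hy ⟨k, hk, hyc⟩
        rw [this]
        simp
      rw [Finset.sum_congr rfl hz] at this
      simp at this
    · rintro ⟨k, hk, hxk⟩ U hU hxU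
      rw [happly _ hU.measurableSet]
      have hpos : 0 < (w k / V) * volume (U ∩ cube (z k) hl) := by
        apply ENNReal.mul_pos
        · apply ne_of_gt
          apply ENNReal.div_pos (hw0 k hk).ne' hVtop
        · exact (volume_inter_cube_pos hl0 hU hxU hxk).ne'
      calc (0:ℝ≥0∞) < (w k / V) * volume (U ∩ cube (z k) hl) := hpos
        _ ≤ ∑ k ∈ S, (w k / V) * volume (U ∩ cube (z k) hl) := by
            apply Finset.single_le_sum (f := fun k => (w k / V) * volume (U ∩ cube (z k) hl))
              (fun _ _ => zero_le) hk

end Eta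

/-! ### Grid cubes -/

section Grid

variable {d : ℕ}

/-- Half-open grid cube of side `ℓ` indexed by `k`. -/
def gridHo (d : ℕ) (ℓ : ℝ) (k : Fin d → ℤ) : Set (EuclideanSpace ℝ (Fin d)) :=
  {x | ∀ i, (k i : ℝ) * ℓ ≤ x i ∧ x i < ((k i : ℝ) + 1) * ℓ}

/-- Closed grid cube of side `ℓ` indexed by `k`. -/
def gridCl (d : ℕ) (ℓ : ℝ) (k : Fin d → ℤ) : Set (EuclideanSpace ℝ (Fin d)) :=
  {x | ∀ i, (k i : ℝ) * ℓ ≤ x i ∧ x i ≤ ((k i : ℝ) + 1) * ℓ}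

noncomputable def gidx {d : ℕ} (ℓ : ℝ) (x : EuclideanSpace ℝ (Fin d)) : Fin d → ℤ :=
  fun i => ⌊x i / ℓ⌋

lemma gridHo_subset_gridCl (ℓ : ℝ) (k : Fin d → ℤ) : gridHo d ℓ k ⊆ gridCl d ℓ k :=
  fun _ hx i => ⟨(hx i).1, (hx i).2.le⟩

lemma mem_gridHo_gidx {ℓ : ℝ} (hℓ : 0 < ℓ) (x : EuclideanSpace ℝ (Fin d)) :
    x ∈ gridHo d ℓ (gidx ℓ x) := by
  intro i
  constructor
  · rw [← le_div_iff₀ hℓ]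
    exact Int.floor_le _
  · rw [← div_lt_iff₀ hℓ]
    exact Int.lt_floor_add_one _

lemma gridHo_disjoint {ℓ : ℝ} (hℓ : 0 < ℓ) {k k' : Fin d → ℤ} (h : k ≠ k') :
    Disjoint (gridHo d ℓ k) (gridHo d ℓ k') := by
  rw [Set.disjoint_left]
  intro x hx hx'
  obtain ⟨i, hne⟩ := Function.ne_iff.1 h
  have h1 := hx i
  have h2 := hx' i
  rcases lt_or_gt_of_ne hne with hlt | hlt
  · have : ((k i : ℝ) + 1) ≤ (k' i : ℝ) := by exact_mod_cast Int.add_one_le_iff.2 hlt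
    nlinarith [h1.2, h2.1]
  · have : ((k' i : ℝ) + 1) ≤ (k i : ℝ) := by exact_mod_cast Int.add_one_le_iff.2 hlt
    nlinarith [h1.1, h2.2]

lemma gridHo_measurable (ℓ : ℝ) (k : Fin d → ℤ) : MeasurableSet (gridHo d ℓ k) := by
  have : gridHo d ℓ k = ⋂ i, {x : EuclideanSpace ℝ (Fin d) |
      (k i : ℝ) * ℓ ≤ x i ∧ x i < ((k i : ℝ) + 1) * ℓ} := by
    ext x; simp [gridHo]
  rw [this]
  apply MeasurableSet.iInter
  intro i
  have hm : Measurable fun x : EuclideanSpace ℝ (Fin d) => x i :=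
    (EuclideanSpace.proj i : EuclideanSpace ℝ (Fin d) →L[ℝ] ℝ).continuous.measurable
  exact (measurableSet_le measurable_const hm).inter (measurableSet_lt hm measurable_const)

lemma gridHo_nonempty {ℓ : ℝ} (hℓ : 0 < ℓ) (k : Fin d → ℤ) :
    (gridHo d ℓ k).Nonempty := by
  refine ⟨WithLp.toLp 2 (fun i => (k i : ℝ) * ℓ), fun i => ⟨le_refl _, ?_⟩⟩
  show (k i : ℝ) * ℓ < ((k i : ℝ) + 1) * ℓ
  nlinarith

lemma gridCl_dist_le {ℓ : ℝ} (hℓ : 0 < ℓ) {k : Fin d → ℤ}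
    {x y : EuclideanSpace ℝ (Fin d)} (hx : x ∈ gridCl d ℓ k) (hy : y ∈ gridCl d ℓ k) :
    dist x y ≤ Real.sqrt d * ℓ := by
  apply dist_le_of_coords hℓ.le
  intro i
  have h1 := hx i
  have h2 := hy i
  rw [abs_sub_le_iff]
  constructor <;> nlinarith [h1.1, h1.2, h2.1, h2.2]

lemma gidx_mem_box {ℓ : ℝ} (hℓ : 0 < ℓ) {K : ℝ} (hK : 0 ≤ K) {k : Fin d → ℤ}
    {x : EuclideanSpace ℝ (Fin d)} (hx : x ∈ gridCl d ℓ k)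
    (hxK : x ∈ closedBall (0:EuclideanSpace ℝ (Fin d)) K) (i : Fin d) :
    k i ∈ Finset.Icc (-(⌈K / ℓ⌉ + 1)) (⌈K / ℓ⌉ + 1) := by
  have hxi : |x i| ≤ K := by
    have h1 := ES.abs_coord_le_norm x i
    have h2 : ‖x‖ ≤ K := by
      rw [← dist_zero_right]
      exact mem_closedBall.1 hxK
    linarith
  have h1 := (hx i).1
  have h2 := (hx i).2
  have hceil : K / ℓ ≤ (⌈K / ℓ⌉ : ℝ) := Int.le_ceil _
  rw [Finset.mem_Icc]
  rw [abs_le] at hxi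
  constructor
  · have hr : (-(⌈K / ℓ⌉ + 1) : ℝ) ≤ (k i : ℝ) := by
      have : -(K/ℓ) ≤ (k i : ℝ) + 1 := by
        rw [← neg_div, div_le_iff₀ hℓ]
        nlinarith
      push_cast
      linarith
    exact_mod_cast hr
  · have hr : (k i : ℝ) ≤ ((⌈K / ℓ⌉ + 1) : ℤ) := by
      have : (k i : ℝ) ≤ K / ℓ := by
        rw [le_div_iff₀ hℓ]
        nlinarith
      push_cast
      linarith
    exact_mod_cast hr

lemma grid_finite {ℓ : ℝ} (hℓ : 0 < ℓ) {K : ℝ} (hK : 0 ≤ K) :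
    {k : Fin d → ℤ |
      (gridCl d ℓ k ∩ closedBall (0:EuclideanSpace ℝ (Fin d)) K).Nonempty}.Finite := by
  apply Set.Finite.subset (Set.Finite.pi (fun _ : Fin d =>
    Set.finite_Icc (-(⌈K / ℓ⌉ + 1)) (⌈K / ℓ⌉ + 1)))
  rintro k ⟨x, hx1, hx2⟩
  intro i _
  simpa using gidx_mem_box hℓ hK hx1 hx2 i

/-- Union of half-open grid cubes of scale `ℓ` whose closed version is inside `E`. -/
def gridUnion (d : ℕ) (ℓ : ℝ) (E : Set (EuclideanSpace ℝ (Fin d))) :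
    Set (EuclideanSpace ℝ (Fin d)) :=
  ⋃ k, ⋃ (_ : gridCl d ℓ k ⊆ E), gridHo d ℓ k

lemma gridUnion_mono {ℓ : ℝ} (hℓ : 0 < ℓ) (E : Set (EuclideanSpace ℝ (Fin d))) :
    gridUnion d ℓ E ⊆ gridUnion d (ℓ/2) E := by
  intro x hx
  simp only [gridUnion, mem_iUnion] at hx ⊢
  obtain ⟨k, hkE, hxk⟩ := hx
  have hℓ2 : 0 < ℓ/2 := by linarith
  refine ⟨gidx (ℓ/2) x, ?_, mem_gridHo_gidx hℓ2 x⟩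
  set k' := gidx (ℓ/2) x with hk'
  have hbounds : ∀ i, 2 * k i ≤ k' i ∧ k' i ≤ 2 * k i + 1 := by
    intro i
    have h1 := (hxk i).1
    have h2 := (hxk i).2
    have h3 := (mem_gridHo_gidx hℓ2 x i).1
    have h4 := (mem_gridHo_gidx hℓ2 x i).2
    rw [← hk'] at h3 h4
    constructor
    · have hr : (2 * k i : ℝ) < (k' i : ℝ) + 1 := by
        rw [← sub_lt_iff_lt_add]
        nlinarith
      have : (2 * k i : ℤ) < k' i + 1 := by exact_mod_cast hr
      omega
    · have hr : (k' i : ℝ) < 2 * (k i : ℝ) + 2 := by nlinarith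
      have : (k' i : ℤ) < 2 * k i + 2 := by exact_mod_cast hr
      omega
  intro y hy
  apply hkE
  intro i
  have hb := hbounds i
  have h1 := (hy i).1
  have h2 := (hy i).2
  have hc1 : ((2 * k i : ℤ) : ℝ) ≤ (k' i : ℝ) := by exact_mod_cast hb.1
  have hc2 : ((k' i : ℤ) : ℝ) ≤ ((2 * k i + 1 : ℤ) : ℝ) := by exact_mod_cast hb.2
  push_cast at hc1 hc2
  constructor <;> nlinarith

lemma measure_E_eq_one {E : Set (EuclideanSpace ℝ (Fin d))} (hE : IsOpen E)
    (μ : Measure (EuclideanSpace ℝ (Fin d))) [IsProbabilityMeasure μ] (hμE : μ Eᶜ = 0) :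
    μ E = 1 := by
  apply le_antisymm prob_le_one
  calc (1:ℝ≥0∞) = μ Set.univ := measure_univ.symm
    _ = μ (E ∪ Eᶜ) := by rw [Set.union_compl_self]
    _ ≤ μ E + μ Eᶜ := measure_union_le _ _
    _ = μ E := by rw [hμE, add_zero]

lemma exists_good_scale {E : Set (EuclideanSpace ℝ (Fin d))} (hE : IsOpen E)
    (μ : Measure (EuclideanSpace ℝ (Fin d))) [IsProbabilityMeasure μ] (hμE : μ Eᶜ = 0) :
    ∃ ℓ : ℝ, 0 < ℓ ∧ 1/2 < μ (gridUnion d ℓ E) := by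
  have hcov : E ⊆ ⋃ n : ℕ, gridUnion d ((1/2)^n) E := by
    intro x hx
    obtain ⟨ε, hε, hball⟩ := Metric.isOpen_iff.1 hE x hx
    obtain ⟨n, hn⟩ := exists_pow_lt_of_lt_one
      (div_pos hε (by positivity : (0:ℝ) < Real.sqrt d + 1))
      (by norm_num : (1:ℝ)/2 < 1)
    set ℓ := ((1:ℝ)/2)^n with hℓdef
    have hℓ : 0 < ℓ := by positivity
    simp only [mem_iUnion]
    refine ⟨n, ?_⟩
    simp only [gridUnion, mem_iUnion]
    refine ⟨gidx ℓ x, ?_, mem_gridHo_gidx hℓ x⟩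
    intro y hy
    apply hball
    rw [mem_ball]
    have hxg : x ∈ gridCl d ℓ (gidx ℓ x) := gridHo_subset_gridCl ℓ _ (mem_gridHo_gidx hℓ x)
    have := gridCl_dist_le hℓ hy hxg
    calc dist y x ≤ Real.sqrt d * ℓ := this
      _ ≤ (Real.sqrt d + 1) * ℓ := by nlinarith [Real.sqrt_nonneg (d:ℝ)]
      _ < (Real.sqrt d + 1) * (ε / (Real.sqrt d + 1)) := by
          apply mul_lt_mul_of_pos_left hn (by positivity)
      _ = ε := by field_simp
  have hmono : Monotone (fun n : ℕ => gridUnion d ((1/2)^n) E) := by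
    apply monotone_nat_of_le_succ
    intro n
    have := gridUnion_mono (d := d) (by positivity : (0:ℝ) < (1/2)^n) E
    convert this using 2
    · rfl
    rw [pow_succ]
    ring
  have hμ1 : μ E = 1 := measure_E_eq_one hE μ hμE
  have hsup : 1 ≤ ⨆ n : ℕ, μ (gridUnion d ((1/2)^n) E) := by
    rw [← Directed.measure_iUnion hmono.directed_le]
    calc (1:ℝ≥0∞) = μ E := hμ1.symm
      _ ≤ _ := measure_mono hcov
  have : (1:ℝ≥0∞)/2 < ⨆ n : ℕ, μ (gridUnion d ((1/2)^n) E) := by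
    apply lt_of_lt_of_le _ hsup
    norm_num
  rw [lt_iSup_iff] at this
  obtain ⟨n, hn⟩ := this
  exact ⟨(1/2)^n, by positivity, hn⟩

end Grid

/-! ### Bounds on `phi` -/

section PhiBounds

variable {d : ℕ}

lemma measure_ball_one {E : Set (EuclideanSpace ℝ (Fin d))}
    {x₀ : EuclideanSpace ℝ (Fin d)} {R : ℝ} (hER : E ⊆ closedBall x₀ R)
    (μ : Measure (EuclideanSpace ℝ (Fin d))) [IsProbabilityMeasure μ] (hμE : μ Eᶜ = 0) :
    μ (closedBall x₀ R) = 1 := by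
  apply le_antisymm prob_le_one
  calc (1:ℝ≥0∞) = μ Set.univ := measure_univ.symm
    _ = μ (closedBall x₀ R ∪ (closedBall x₀ R)ᶜ) := by rw [Set.union_compl_self]
    _ ≤ μ (closedBall x₀ R) + μ (closedBall x₀ R)ᶜ := measure_union_le _ _
    _ ≤ μ (closedBall x₀ R) + μ Eᶜ := by gcongr
    _ = μ (closedBall x₀ R) := by rw [hμE, add_zero]

lemma phi_le_ball {s : ℝ} {E : Set (EuclideanSpace ℝ (Fin d))}
    {x₀ : EuclideanSpace ℝ (Fin d)} (hx₀ : x₀ ∈ E) {R : ℝ} (hR : 0 < R)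
    (hER : E ⊆ closedBall x₀ R) : phi s E ≤ ENNReal.ofReal (R^s) := by
  apply iSup_le; intro μ
  apply iSup_le; intro hμ
  apply iSup_le; intro hμE
  calc (⨅ (x : EuclideanSpace ℝ (Fin d)) (_ : x ∈ E) (r : ℝ) (_ : 0 < r),
      ENNReal.ofReal (r ^ s) / μ (closedBall x r))
      ≤ ENNReal.ofReal (R ^ s) / μ (closedBall x₀ R) := by
        refine le_trans (iInf_le _ x₀) (le_trans (iInf_le _ hx₀) ?_)
        exact le_trans (iInf_le _ R) (iInf_le _ hR)
    _ = ENNReal.ofReal (R ^ s) := by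
        rw [measure_ball_one hER μ hμE]
        simp

lemma phi_eq_zero_of_gt {s : ℝ} (hds : (d:ℝ) < s) {E : Set (EuclideanSpace ℝ (Fin d))}
    (hE : IsOpen E) {K : ℝ} (hK : 1 ≤ K)
    (hEK : E ⊆ closedBall (0:EuclideanSpace ℝ (Fin d)) K) : phi s E = 0 := by
  have hs0 : 0 ≤ s := le_trans (Nat.cast_nonneg d) hds.le
  have hK0 : (0:ℝ) < K := lt_of_lt_of_le one_pos hK
  apply le_antisymm _ (zero_le)
  apply iSup_le; intro μ
  apply iSup_le; intro hμ
  apply iSup_le; intro hμE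
  apply ENNReal.le_of_forall_pos_le_add
  intro ε hε _
  rw [zero_add]
  set C : ℝ := (Real.sqrt d + 1)^(s:ℝ) * (7*K)^d with hC
  have hsd : (0:ℝ) ≤ Real.sqrt d := Real.sqrt_nonneg _
  have hC1 : 1 ≤ C := by
    apply one_le_mul_of_one_le_of_one_le
    · apply Real.one_le_rpow (by linarith) hs0
    · apply one_le_pow₀ (by linarith)
  have hC0 : 0 < C := lt_of_lt_of_le one_pos hC1
  set t : ℝ := s - d with ht
  have ht0 : 0 < t := by simp [ht]; linarith
  set δ : ℝ := min 1 ((ε:ℝ) / C) with hδ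
  have hδ0 : 0 < δ := lt_min one_pos (div_pos hε hC0)
  set ℓ : ℝ := min K (δ^(1/t)) with hℓdef
  have hℓ0 : 0 < ℓ := lt_min hK0 (Real.rpow_pos_of_pos hδ0 _)
  have hℓK : ℓ ≤ K := min_le_left _ _
  set m : ℤ := ⌈K / ℓ⌉ + 1 with hm
  set F : Finset (Fin d → ℤ) :=
    Fintype.piFinset (fun _ : Fin d => Finset.Icc (-m) m) with hF
  set N : ℕ := F.card with hN
  have hNcard : (N:ℝ) ≤ (7*K/ℓ)^d := by
    have hcard : N = ((2*m+1).toNat)^d := by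
      rw [hN, hF, Fintype.card_piFinset]
      simp only [Int.card_Icc]
      rw [Finset.prod_const, Finset.card_univ, Fintype.card_fin]
      congr 1
      congr 1
      omega
    rw [hcard]
    push_cast
    apply pow_le_pow_left₀ (by positivity)
    have h1 : ((2*m+1 : ℤ):ℝ) = 2*(⌈K/ℓ⌉:ℝ) + 3 := by push_cast [hm]; ring
    have h2 : (⌈K/ℓ⌉:ℝ) < K/ℓ + 1 := Int.ceil_lt_add_one _
    have h3 : 1 ≤ K/ℓ := (one_le_div hℓ0).2 hℓK
    have h4 : ((2*m+1).toNat : ℝ) = ((2*m+1 : ℤ) : ℝ) := by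
      have : (0:ℤ) ≤ 2*m+1 := by
        have : (0:ℤ) ≤ ⌈K/ℓ⌉ := Int.ceil_nonneg (by positivity)
        omega
      exact_mod_cast Int.toNat_of_nonneg this
    rw [h4, h1, le_div_iff₀ hℓ0]
    have hKdiv : K/ℓ*ℓ = K := div_mul_cancel₀ _ hℓ0.ne'
    nlinarith [mul_lt_mul_of_pos_right h2 hℓ0, hKdiv, hℓK]
  have hNpos : 0 < N := by
    rw [hN, hF]
    apply Finset.card_pos.2
    refine ⟨fun _ => 0, ?_⟩
    rw [Fintype.mem_piFinset]
    intro i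
    rw [Finset.mem_Icc]
    have : (0:ℤ) ≤ ⌈K/ℓ⌉ := Int.ceil_nonneg (by positivity)
    omega
  have hcover : (1:ℝ≥0∞) ≤ ∑ k ∈ F, μ (gridHo d ℓ k) := by
    have hsub : E ⊆ ⋃ k ∈ F, gridHo d ℓ k := by
      intro x hx
      rw [Set.mem_iUnion₂]
      refine ⟨gidx ℓ x, ?_, mem_gridHo_gidx hℓ0 x⟩
      rw [hF, Fintype.mem_piFinset]
      intro i
      exact gidx_mem_box hℓ0 hK0.le
        (gridHo_subset_gridCl ℓ _ (mem_gridHo_gidx hℓ0 x)) (hEK hx) i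
    calc (1:ℝ≥0∞) = μ E := (measure_E_eq_one hE μ hμE).symm
      _ ≤ μ (⋃ k ∈ F, gridHo d ℓ k) := measure_mono hsub
      _ ≤ ∑ k ∈ F, μ (gridHo d ℓ k) := measure_biUnion_finset_le _ _
  have hpigeon : ∃ k ∈ F, ((N:ℝ≥0∞))⁻¹ ≤ μ (gridHo d ℓ k) := by
    have hFne : F.Nonempty := Finset.card_pos.1 hNpos
    have hreal : ∃ k ∈ F, (N:ℝ)⁻¹ ≤ (μ (gridHo d ℓ k)).toReal := by
      by_contra hcon
      push_neg at hcon
      have hlt : ∑ k ∈ F, (μ (gridHo d ℓ k)).toReal < ∑ _k ∈ F, (N:ℝ)⁻¹ :=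
        Finset.sum_lt_sum_of_nonempty hFne hcon
      rw [Finset.sum_const, ← hN, nsmul_eq_mul,
        mul_inv_cancel₀ (by exact_mod_cast hNpos.ne' : (N:ℝ) ≠ 0)] at hlt
      have hsum1 : (1:ℝ) ≤ ∑ k ∈ F, (μ (gridHo d ℓ k)).toReal := by
        have := ENNReal.toReal_mono (a := 1) ?_ hcover
        · rw [ENNReal.toReal_one, ENNReal.toReal_sum (fun k _ => measure_ne_top μ _)] at this
          exact this
        · exact (ENNReal.sum_lt_top.2 fun k _ => measure_lt_top μ _).ne
      linarith
    obtain ⟨k, hkF, hk⟩ := hreal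
    refine ⟨k, hkF, ?_⟩
    have hNinv : ((N:ℝ≥0∞))⁻¹ = ENNReal.ofReal ((N:ℝ)⁻¹) := by
      rw [ENNReal.ofReal_inv_of_pos (by exact_mod_cast hNpos : (0:ℝ) < N),
        ENNReal.ofReal_natCast]
    rw [hNinv, ← ENNReal.ofReal_toReal (measure_ne_top μ (gridHo d ℓ k))]
    exact ENNReal.ofReal_le_ofReal hk
  obtain ⟨k, hkF, hkμ⟩ := hpigeon
  have hEk : (gridHo d ℓ k ∩ E).Nonempty := by
    by_contra hcon
    rw [Set.not_nonempty_iff_eq_empty] at hcon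
    have hsub : gridHo d ℓ k ⊆ Eᶜ := by
      intro y hy hyE
      exact absurd (Set.mem_inter hy hyE) (by rw [hcon]; exact Set.notMem_empty y)
    have : μ (gridHo d ℓ k) = 0 := measure_mono_null hsub hμE
    rw [this] at hkμ
    simp only [nonpos_iff_eq_zero, ENNReal.inv_eq_zero] at hkμ
    exact absurd hkμ (ENNReal.natCast_ne_top N)
  obtain ⟨x, hxk, hxE⟩ := hEk
  set r : ℝ := (Real.sqrt d + 1) * ℓ with hr
  have hr0 : 0 < r := by positivity
  have hsubB : gridHo d ℓ k ⊆ closedBall x r := by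
    intro y hy
    rw [mem_closedBall]
    calc dist y x ≤ Real.sqrt d * ℓ :=
        gridCl_dist_le hℓ0 (gridHo_subset_gridCl ℓ k hy) (gridHo_subset_gridCl ℓ k hxk)
      _ ≤ r := by rw [hr]; nlinarith
  have hterm : ENNReal.ofReal (r ^ s) / μ (closedBall x r) ≤ (ε:ℝ≥0∞) := by
    have h1 : ((N:ℝ≥0∞))⁻¹ ≤ μ (closedBall x r) := le_trans hkμ (measure_mono hsubB)
    calc ENNReal.ofReal (r ^ s) / μ (closedBall x r)
        ≤ ENNReal.ofReal (r ^ s) / ((N:ℝ≥0∞))⁻¹ := ENNReal.div_le_div_left h1 _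
      _ = ENNReal.ofReal (r ^ s) * N := by rw [div_eq_mul_inv, inv_inv]
      _ = ENNReal.ofReal (r ^ s) * ENNReal.ofReal (N:ℝ) := by rw [ENNReal.ofReal_natCast]
      _ = ENNReal.ofReal (r ^ s * N) := (ENNReal.ofReal_mul (by positivity)).symm
      _ ≤ ENNReal.ofReal (ε:ℝ) := by
          apply ENNReal.ofReal_le_ofReal
          have hrs : r ^ s * (N:ℝ) ≤ C * ℓ^t := by
            have hbound : r ^ s * (N:ℝ) ≤ ((Real.sqrt d + 1) * ℓ)^s * (7*K/ℓ)^d := by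
              apply mul_le_mul_of_nonneg_left hNcard (Real.rpow_nonneg (by positivity) _)
            refine hbound.trans (le_of_eq ?_)
            rw [Real.mul_rpow (by linarith) hℓ0.le, div_pow, ← Real.rpow_natCast ℓ d, hC,
              ht, Real.rpow_sub hℓ0]
            ring
          have hℓt : ℓ^t ≤ δ := by
            have h1 : ℓ ≤ δ^(1/t) := min_le_right _ _
            calc ℓ^t ≤ (δ^(1/t))^t := Real.rpow_le_rpow hℓ0.le h1 ht0.le
              _ = δ^((1/t)*t) := (Real.rpow_mul hδ0.le _ _).symm
              _ = δ := by rw [one_div_mul_cancel ht0.ne', Real.rpow_one]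
          calc r ^ s * (N:ℝ) ≤ C * ℓ^t := hrs
            _ ≤ C * ((ε:ℝ)/C) := by
                apply mul_le_mul_of_nonneg_left (hℓt.trans (min_le_right _ _)) hC0.le
            _ = (ε:ℝ) := mul_div_cancel₀ _ hC0.ne'
      _ = (ε:ℝ≥0∞) := ENNReal.ofReal_coe_nnreal
  calc (⨅ (x : EuclideanSpace ℝ (Fin d)) (_ : x ∈ E) (r : ℝ) (_ : 0 < r),
      ENNReal.ofReal (r ^ s) / μ (closedBall x r))
      ≤ ENNReal.ofReal (r ^ s) / μ (closedBall x r) := by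
        refine le_trans (iInf_le _ x) (le_trans (iInf_le _ hxE) ?_)
        exact le_trans (iInf_le _ r) (iInf_le _ hr0)
    _ ≤ (ε:ℝ≥0∞) := hterm

/-- Final packaging step: from a multiplicative Frostman bound for `η` on closed balls,
deduce the inequality in the theorem. -/
lemma phi_le_of_frostman {s : ℝ} {E : Set (EuclideanSpace ℝ (Fin d))}
    {η : Measure (EuclideanSpace ℝ (Fin d))} [IsProbabilityMeasure η]
    {κ : ℝ} (hκ : 0 < κ)
    (hfrost : ∀ x ∈ E, ∀ r : ℝ, 0 < r →
      phi s E * η (closedBall x r) ≤ ENNReal.ofReal κ * ENNReal.ofReal (r^s)) :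
    phi s E ≤ ENNReal.ofReal κ *
      ⨅ (x : EuclideanSpace ℝ (Fin d)) (_ : x ∈ E) (r : ℝ) (_ : 0 < r),
        ENNReal.ofReal (r ^ s) / η (E ∩ closedBall x r) := by
  set κ' : ℝ≥0∞ := ENNReal.ofReal κ with hκ'
  have hκ'0 : κ' ≠ 0 := by simp [hκ', hκ]
  have hκ't : κ' ≠ ⊤ := ENNReal.ofReal_ne_top
  have hstep : ∀ x ∈ E, ∀ r : ℝ, 0 < r →
      phi s E / κ' ≤ ENNReal.ofReal (r ^ s) / η (E ∩ closedBall x r) := by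
    intro x hx r hr
    rw [ENNReal.div_le_iff_le_mul (Or.inl hκ'0) (Or.inl hκ't)]
    have hmul : phi s E * η (E ∩ closedBall x r) ≤ κ' * ENNReal.ofReal (r^s) := by
      calc phi s E * η (E ∩ closedBall x r) ≤ phi s E * η (closedBall x r) := by
            apply mul_le_mul_right
            exact measure_mono Set.inter_subset_right
        _ ≤ κ' * ENNReal.ofReal (r^s) := hfrost x hx r hr
    have hdiv : phi s E ≤ (κ' * ENNReal.ofReal (r^s)) / η (E ∩ closedBall x r) := by
      rw [ENNReal.le_div_iff_mul_le
        (Or.inr (by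
          apply mul_ne_zero hκ'0
          simp only [ne_eq, ENNReal.ofReal_eq_zero, not_le]
          positivity))
        (Or.inl (measure_ne_top η _))]
      exact hmul
    refine hdiv.trans (le_of_eq ?_)
    rw [div_eq_mul_inv, div_eq_mul_inv, mul_assoc, mul_comm κ' _]
  have hI : phi s E / κ' ≤
      ⨅ (x : EuclideanSpace ℝ (Fin d)) (_ : x ∈ E) (r : ℝ) (_ : 0 < r),
        ENNReal.ofReal (r ^ s) / η (E ∩ closedBall x r) := by
    apply le_iInf; intro x
    apply le_iInf; intro hx
    apply le_iInf; intro r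
    apply le_iInf; intro hr
    exact hstep x hx r hr
  calc phi s E = κ' * (phi s E / κ') := (ENNReal.mul_div_cancel hκ'0 hκ't).symm
    _ ≤ κ' * _ := mul_le_mul_right hI _

end PhiBounds


section RealIneq

lemma real_ineq_key {dd : ℕ} {s ℓ r : ℝ} (hsd : s ≤ dd) (hℓ : 0 < ℓ)
    (hr : 0 < r) (hrℓ : r ≤ ℓ) : ℓ^s * (r^dd / ℓ^dd) ≤ r^s := by
  have h1 : ℓ^s / ℓ^dd = ℓ^(s - dd) := by
    rw [← Real.rpow_natCast ℓ dd, ← Real.rpow_sub hℓ]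
  have h2 : ℓ^(s-(dd:ℝ)) ≤ r^(s-(dd:ℝ)) :=
    Real.rpow_le_rpow_of_nonpos hr hrℓ (by linarith)
  have h3 : r^(dd:ℕ) * r^(s-(dd:ℝ)) = r^s := by
    rw [← Real.rpow_natCast r dd, ← Real.rpow_add hr]
    ring_nf
  calc ℓ^s * (r^dd / ℓ^dd) = r^dd * (ℓ^s/ℓ^dd) := by ring
    _ = r^dd * ℓ^(s-(dd:ℝ)) := by rw [h1]
    _ ≤ r^dd * r^(s-(dd:ℝ)) := by
        apply mul_le_mul_of_nonneg_left h2 (by positivity)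
    _ = r^s := h3

lemma real_ineq_small {dd : ℕ} {s ℓ r : ℝ} (hs : 0 ≤ s) (hsd : s ≤ dd) (hℓ : 0 < ℓ)
    (hr : 0 < r) (hrℓ : r ≤ ℓ) :
    ((Real.sqrt dd + 1)*ℓ)^s * ((2*r)^dd/(ℓ/2)^dd) ≤ 4^dd * (1+4*Real.sqrt dd)^s * r^s := by
  have hsq : (0:ℝ) ≤ Real.sqrt dd := Real.sqrt_nonneg _
  have e1 : ((Real.sqrt dd + 1)*ℓ)^s = (Real.sqrt dd + 1)^s * ℓ^s :=
    Real.mul_rpow (by linarith) hℓ.le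
  have e2 : ((2*r):ℝ)^dd/(ℓ/2)^dd = 4^dd * (r^dd/ℓ^dd) := by
    rw [mul_pow, div_pow, div_div_eq_mul_div, mul_comm ((2:ℝ)^dd) (r^dd), mul_assoc]
    rw [← mul_pow]
    ring_nf
  calc ((Real.sqrt dd + 1)*ℓ)^s * ((2*r)^dd/(ℓ/2)^dd)
      = (Real.sqrt dd + 1)^s * 4^dd * (ℓ^s * (r^dd/ℓ^dd)) := by rw [e1, e2]; ring
    _ ≤ (Real.sqrt dd + 1)^s * 4^dd * r^s := by
        apply mul_le_mul_of_nonneg_left (real_ineq_key hsd hℓ hr hrℓ) (by positivity)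
    _ ≤ 4^dd * (1+4*Real.sqrt dd)^s * r^s := by
        have h7 : (Real.sqrt dd + 1)^s ≤ (1+4*Real.sqrt dd)^s :=
          Real.rpow_le_rpow (by linarith) (by linarith) hs
        calc (Real.sqrt dd + 1)^s * 4^dd * r^s
            = (4^dd * r^s) * (Real.sqrt dd + 1)^s := by ring
          _ ≤ (4^dd * r^s) * (1+4*Real.sqrt dd)^s := by
              apply mul_le_mul_of_nonneg_left h7
              positivity
          _ = 4^dd * (1+4*Real.sqrt dd)^s * r^s := by ring

end RealIneq

set_option maxHeartbeats 2000000 in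
/-- Lemma 2.3: there is `κ₁ > 0` such that for any nonempty open bounded `E ⊆ ℝ^d` there
is an absolutely continuous probability measure `η` of bounded density, supported on a
finite union of disjoint closed cubes contained in `E`, with
`φ^s(E) ≤ κ₁ · inf_{x∈E} inf_{r>0} r^s / η(E ∩ B_r(x))`. -/
theorem phi_approx_by_ac_measure (d : ℕ) (s : ℝ) (hs : 0 ≤ s) :
    ∃ κ₁ : ℝ, 0 < κ₁ ∧
      ∀ E : Set (EuclideanSpace ℝ (Fin d)), IsOpen E → E.Nonempty →
        Bornology.IsBounded E →
        ∃ η : Measure (EuclideanSpace ℝ (Fin d)), IsProbabilityMeasure η ∧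
          (∃ f : EuclideanSpace ℝ (Fin d) → ℝ≥0∞,
            (∃ C : ℝ≥0∞, C ≠ ⊤ ∧ ∀ x, f x ≤ C) ∧ η = volume.withDensity f) ∧
          (∃ (k : ℕ) (z : Fin k → EuclideanSpace ℝ (Fin d)) (h : Fin k → ℝ),
            (∀ j, 0 < h j) ∧
            (∀ j, cube (z j) (h j) ⊆ E) ∧
            (∀ j j', j ≠ j' → Disjoint (cube (z j) (h j)) (cube (z j') (h j'))) ∧
            msupport η = ⋃ j, cube (z j) (h j)) ∧
          phi s E ≤ ENNReal.ofReal κ₁ *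
            ⨅ (x : EuclideanSpace ℝ (Fin d)) (_ : x ∈ E) (r : ℝ) (_ : 0 < r),
              ENNReal.ofReal (r ^ s) / η (E ∩ closedBall x r) := by
  classical
  have hsd0 : (0:ℝ) ≤ Real.sqrt d := Real.sqrt_nonneg _
  set κ₁ : ℝ := 4 * 4^d * (1 + 4*Real.sqrt d)^s with hκdef
  have h4d : (1:ℝ) ≤ 4^d := one_le_pow₀ (by norm_num)
  have hκpow : (0:ℝ) < (1 + 4*Real.sqrt d)^s := Real.rpow_pos_of_pos (by linarith) _
  have hκ1 : 0 < κ₁ := by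
    rw [hκdef]
    positivity
  refine ⟨κ₁, hκ1, ?_⟩
  intro E hEopen hEne hEbd
  obtain ⟨x₀, hx₀⟩ := hEne
  obtain ⟨R₀, hR₀⟩ := (Metric.isBounded_iff_subset_closedBall x₀).1 hEbd
  set R : ℝ := max R₀ 1 with hRdef
  have hR1 : (1:ℝ) ≤ R := le_max_right _ _
  have hR0 : 0 < R := lt_of_lt_of_le one_pos hR1
  have hER : E ⊆ closedBall x₀ R := hR₀.trans (closedBall_subset_closedBall (le_max_left _ _))
  set K : ℝ := ‖x₀‖ + R with hKdef
  have hK1 : 1 ≤ K := by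
    have := norm_nonneg x₀
    rw [hKdef]; linarith
  have hEK : E ⊆ closedBall (0:EuclideanSpace ℝ (Fin d)) K := by
    intro y hy
    rw [mem_closedBall]
    calc dist y 0 ≤ dist y x₀ + dist x₀ 0 := dist_triangle _ _ _
      _ ≤ R + ‖x₀‖ := add_le_add (hER hy) (by rw [dist_zero_right])
      _ = K := by rw [hKdef]; ring
  have hcube0 : ∃ (c : EuclideanSpace ℝ (Fin d)) (h0 : ℝ), 0 < h0 ∧ cube c h0 ⊆ E := by
    obtain ⟨ε, hε, hball⟩ := Metric.isOpen_iff.1 hEopen x₀ hx₀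
    refine ⟨x₀, ε/(2*Real.sqrt d + 2), by positivity, ?_⟩
    intro y hy
    apply hball
    rw [mem_ball]
    have h1 := dist_le_of_coords (by positivity : (0:ℝ) ≤ ε/(2*Real.sqrt d + 2)) hy
    have h2 : Real.sqrt d * (ε/(2*Real.sqrt d+2)) = (Real.sqrt d * ε)/(2*Real.sqrt d+2) := by
      ring
    calc dist y x₀ ≤ Real.sqrt d * (ε/(2*Real.sqrt d+2)) := h1
      _ < ε := by
          rw [h2, div_lt_iff₀ (by positivity)]
          nlinarith
  by_cases hA : phi s E = 0
  · obtain ⟨c, h0, hh0, hcE⟩ := hcube0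
    obtain ⟨η, hηprob, hηdens, hηsupp, _⟩ :=
      exists_eta (d := d) (Finset.univ : Finset Unit) (fun _ => c) h0 hh0 (fun _ => 1)
        (fun _ _ => zero_lt_one) (by simp)
    refine ⟨η, hηprob, hηdens,
      ⟨1, fun _ => c, fun _ => h0, fun _ => hh0, fun _ => hcE, ?_, ?_⟩, ?_⟩
    · intro j j' hjj'
      exact absurd (Subsingleton.elim j j') hjj'
    · rw [hηsupp]
      ext y
      simp
    · rw [hA]
      exact zero_le
  · have hAtop : phi s E ≠ ⊤ := ((phi_le_ball hx₀ hR0 hER).trans_lt ENNReal.ofReal_lt_top).ne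
    have hsle : s ≤ (d:ℝ) := by
      by_contra hgt
      push_neg at hgt
      exact hA (phi_eq_zero_of_gt hgt hEopen hK1 hEK)
    -- extract a near-optimal (Frostman) measure μ
    have hhalf : phi s E / 2 < phi s E := ENNReal.half_lt_self hA hAtop
    have h3 : phi s E / 2 < ⨆ (μ : Measure (EuclideanSpace ℝ (Fin d)))
        (_ : IsProbabilityMeasure μ) (_ : μ Eᶜ = 0),
        ⨅ (x : EuclideanSpace ℝ (Fin d)) (_ : x ∈ E) (r : ℝ) (_ : 0 < r),
          ENNReal.ofReal (r ^ s) / μ (closedBall x r) := hhalf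
    rw [lt_iSup_iff] at h3
    obtain ⟨μ, h3⟩ := h3
    rw [lt_iSup_iff] at h3
    obtain ⟨hμprob, h3⟩ := h3
    rw [lt_iSup_iff] at h3
    obtain ⟨hμE, hμinf⟩ := h3
    haveI := hμprob
    have hfrostμ : ∀ x ∈ E, ∀ r : ℝ, 0 < r →
        phi s E * μ (closedBall x r) ≤ 2 * ENNReal.ofReal (r^s) := by
      intro x hx r hr
      by_cases hB : μ (closedBall x r) = 0
      · rw [hB, mul_zero]
        exact zero_le
      · have hterm : phi s E / 2 ≤ ENNReal.ofReal (r ^ s) / μ (closedBall x r) := by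
          apply le_of_lt
          refine lt_of_lt_of_le hμinf ?_
          exact le_trans (iInf_le _ x) (le_trans (iInf_le _ hx)
            (le_trans (iInf_le _ r) (iInf_le _ hr)))
        rw [ENNReal.le_div_iff_mul_le (Or.inl hB) (Or.inl (measure_ne_top μ _))] at hterm
        have h2eq : (2:ℝ≥0∞) * (phi s E / 2) = phi s E :=
          ENNReal.mul_div_cancel (by norm_num) (by norm_num)
        calc phi s E * μ (closedBall x r)
            = 2 * (phi s E / 2 * μ (closedBall x r)) := by rw [← mul_assoc, h2eq]
          _ ≤ 2 * ENNReal.ofReal (r^s) := mul_le_mul_right hterm _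
    -- choose a good scale
    obtain ⟨ℓ, hℓ0, hGμ⟩ := exists_good_scale hEopen μ hμE
    have hℓ4 : 0 < ℓ/4 := by linarith
    -- the finite family of grid cubes carrying at least half the mass
    have hPfin : {k : Fin d → ℤ | gridCl d ℓ k ⊆ E ∧ 0 < μ (gridHo d ℓ k)}.Finite := by
      apply (grid_finite hℓ0 (by linarith : (0:ℝ) ≤ K)).subset
      intro k hk
      obtain ⟨y, hy⟩ := gridHo_nonempty hℓ0 k
      exact ⟨y, gridHo_subset_gridCl ℓ k hy, hEK (hk.1 (gridHo_subset_gridCl ℓ k hy))⟩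
    set Sfin : Finset (Fin d → ℤ) := hPfin.toFinset with hSdef
    have hSmem : ∀ k, k ∈ Sfin ↔ (gridCl d ℓ k ⊆ E ∧ 0 < μ (gridHo d ℓ k)) :=
      fun k => hPfin.mem_toFinset
    set M : ℝ≥0∞ := ∑ k ∈ Sfin, μ (gridHo d ℓ k) with hMdef
    have hdisjS : (↑Sfin : Set (Fin d → ℤ)).PairwiseDisjoint (gridHo d ℓ) :=
      fun k _ k' _ hne => gridHo_disjoint hℓ0 hne
    have hM1 : M ≤ 1 := by
      rw [hMdef, ← measure_biUnion_finset hdisjS (fun k _ => gridHo_measurable ℓ k)]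
      exact prob_le_one
    have hM2 : 1/2 < M := by
      refine lt_of_lt_of_le hGμ ?_
      set W : Set (EuclideanSpace ℝ (Fin d)) :=
        ⋃ k, ⋃ (_ : μ (gridHo d ℓ k) = 0), gridHo d ℓ k with hW
      have hWnull : μ W = 0 := by
        apply measure_iUnion_null
        intro k
        by_cases hk : μ (gridHo d ℓ k) = 0
        · simpa [hk]
        · simp [hk]
      have hsub : gridUnion d ℓ E ⊆ (⋃ k ∈ Sfin, gridHo d ℓ k) ∪ W := by
        intro x hx
        simp only [gridUnion, mem_iUnion] at hx
        obtain ⟨k, hkE, hxk⟩ := hx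
        by_cases hk : μ (gridHo d ℓ k) = 0
        · right
          exact mem_iUnion.2 ⟨k, mem_iUnion.2 ⟨hk, hxk⟩⟩
        · left
          refine mem_iUnion₂.2 ⟨k, ?_, hxk⟩
          rw [hSmem]
          exact ⟨hkE, pos_iff_ne_zero.2 hk⟩
      calc μ (gridUnion d ℓ E) ≤ μ ((⋃ k ∈ Sfin, gridHo d ℓ k) ∪ W) := measure_mono hsub
        _ ≤ μ (⋃ k ∈ Sfin, gridHo d ℓ k) + μ W := measure_union_le _ _
        _ = μ (⋃ k ∈ Sfin, gridHo d ℓ k) := by rw [hWnull, add_zero]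
        _ ≤ M := by
            rw [hMdef, ← measure_biUnion_finset hdisjS (fun k _ => gridHo_measurable ℓ k)]
    have hM0 : M ≠ 0 := by
      intro h
      rw [h] at hM2
      exact absurd hM2 (by simp)
    have hMtop : M ≠ ⊤ := (hM1.trans_lt ENNReal.one_lt_top).ne
    set w : (Fin d → ℤ) → ℝ≥0∞ := fun k => μ (gridHo d ℓ k) / M with hwdef
    have hw0 : ∀ k ∈ Sfin, 0 < w k := by
      intro k hk
      exact ENNReal.div_pos ((hSmem k).1 hk).2.ne' hMtop
    have hwsum : ∑ k ∈ Sfin, w k = 1 := by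
      rw [hwdef]
      simp only [div_eq_mul_inv, ← Finset.sum_mul]
      exact ENNReal.mul_inv_cancel hM0 hMtop
    set zc : (Fin d → ℤ) → EuclideanSpace ℝ (Fin d) :=
      fun k => WithLp.toLp 2 (fun i => ((k i : ℝ) + 1/2) * ℓ) with hzc
    have hcubeHo : ∀ k, cube (zc k) (ℓ/4) ⊆ gridHo d ℓ k := by
      intro k x hx i
      have hxi := hx i
      have hzz : zc k i = ((k i : ℝ) + 1/2) * ℓ := rfl
      rw [hzz, abs_le] at hxi
      constructor <;> nlinarith [hxi.1, hxi.2]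
    have hcubeE : ∀ k ∈ Sfin, cube (zc k) (ℓ/4) ⊆ E := fun k hk =>
      (hcubeHo k).trans ((gridHo_subset_gridCl ℓ k).trans ((hSmem k).1 hk).1)
    have hcubedisj : ∀ k k', k ≠ k' →
        Disjoint (cube (zc k) (ℓ/4)) (cube (zc k') (ℓ/4)) := by
      intro k k' hne
      exact (gridHo_disjoint hℓ0 hne).mono (hcubeHo k) (hcubeHo k')
    obtain ⟨η, hηprob, hηdens, hηsupp, happly⟩ := exists_eta Sfin zc (ℓ/4) hℓ4 w hw0 hwsum
    haveI := hηprob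
    set V : ℝ≥0∞ := (ENNReal.ofReal (2*(ℓ/4)))^d with hVdef
    have hV0 : V ≠ 0 := by
      apply pow_ne_zero
      simp only [ne_eq, ENNReal.ofReal_eq_zero, not_le]
      linarith
    have hVtop : V ≠ ⊤ := ENNReal.pow_ne_top ENNReal.ofReal_ne_top
    have hVval : V = ENNReal.ofReal ((ℓ/2)^d) := by
      rw [hVdef, ← ENNReal.ofReal_pow (by linarith)]
      congr 1
      ring
    -- the Frostman property for η
    have hfrostη : ∀ x ∈ E, ∀ r : ℝ, 0 < r →
        phi s E * η (closedBall x r) ≤ ENNReal.ofReal κ₁ * ENNReal.ofReal (r^s) := by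
      intro x hx r hr
      rw [happly _ measurableSet_closedBall]
      set S' : Finset (Fin d → ℤ) :=
        Sfin.filter (fun k => (closedBall x r ∩ cube (zc k) (ℓ/4)).Nonempty) with hS'
      have hsum_eq : ∑ k ∈ Sfin, (w k / V) * volume (closedBall x r ∩ cube (zc k) (ℓ/4))
          = ∑ k ∈ S', (w k / V) * volume (closedBall x r ∩ cube (zc k) (ℓ/4)) := by
        symm
        apply Finset.sum_filter_of_ne
        intro k _ hne
        by_contra hcon
        rw [Set.not_nonempty_iff_eq_empty] at hcon
        apply hne
        rw [hcon, measure_empty, mul_zero]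
      rw [hsum_eq]
      rcases lt_or_ge r (ℓ/4) with hcase | hcase
      · -- small radius: at most one cube intersects
        rcases Finset.eq_empty_or_nonempty S' with hS'e | hS'ne
        · rw [hS'e, Finset.sum_empty, mul_zero]
          exact zero_le
        obtain ⟨k₀, hk₀⟩ := hS'ne
        have hk₀S : k₀ ∈ Sfin := (Finset.mem_filter.1 hk₀).1
        have hcard : S'.card ≤ 1 := by
          rw [Finset.card_le_one]
          intro a ha b hb
          by_contra hab
          obtain ⟨pa, hpa⟩ := (Finset.mem_filter.1 ha).2
          obtain ⟨pb, hpb⟩ := (Finset.mem_filter.1 hb).2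
          obtain ⟨i, hi⟩ := Function.ne_iff.1 hab
          have hone : (1:ℝ) ≤ |(a i : ℝ) - (b i : ℝ)| := by
            have h' : (1:ℤ) ≤ |a i - b i| := Int.one_le_abs (sub_ne_zero.2 hi)
            have h'' : ((1:ℤ):ℝ) ≤ ((|a i - b i| : ℤ) : ℝ) := by exact_mod_cast h'
            rw [Int.cast_abs] at h''
            push_cast at h''
            simpa using h''
          have h1 : |pa i - zc a i| ≤ ℓ/4 := hpa.2 i
          have h2 : |pb i - zc b i| ≤ ℓ/4 := hpb.2 i
          have h3 : ℓ ≤ |zc a i - zc b i| := by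
            have heq : zc a i - zc b i = ((a i : ℝ) - (b i : ℝ)) * ℓ := by
              show ((a i : ℝ) + 1/2) * ℓ - ((b i : ℝ) + 1/2) * ℓ = _
              ring
            rw [heq, abs_mul, abs_of_pos hℓ0]
            nlinarith
          have h4 : ℓ/2 ≤ |pa i - pb i| := by
            have t1 : |zc a i - zc b i| ≤ |zc a i - pa i| + |pa i - zc b i| := abs_sub_le _ _ _
            have t2 : |pa i - zc b i| ≤ |pa i - pb i| + |pb i - zc b i| := abs_sub_le _ _ _
            have t3 : |zc a i - pa i| = |pa i - zc a i| := abs_sub_comm _ _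
            linarith
          have h5 : dist pa pb ≤ 2*r := by
            calc dist pa pb ≤ dist pa x + dist x pb := dist_triangle _ _ _
              _ ≤ r + r := by
                  apply add_le_add (mem_closedBall.1 hpa.1)
                  rw [dist_comm]
                  exact mem_closedBall.1 hpb.1
              _ = 2*r := by ring
          have h6 := coord_le_dist pa pb i
          linarith
        have hsub1 : S' ⊆ {k₀} := by
          intro b hb
          rw [Finset.mem_singleton]
          exact Finset.card_le_one.1 hcard b hb k₀ hk₀
        have hsum_le : ∑ k ∈ S', (w k / V) * volume (closedBall x r ∩ cube (zc k) (ℓ/4))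
            ≤ (w k₀ / V) * volume (closedBall x r ∩ cube (zc k₀) (ℓ/4)) := by
          calc ∑ k ∈ S', (w k / V) * volume (closedBall x r ∩ cube (zc k) (ℓ/4))
              ≤ ∑ k ∈ {k₀}, (w k / V) * volume (closedBall x r ∩ cube (zc k) (ℓ/4)) :=
                Finset.sum_le_sum_of_subset hsub1
            _ = _ := Finset.sum_singleton _ _
        have hvol : volume (closedBall x r ∩ cube (zc k₀) (ℓ/4)) ≤ ENNReal.ofReal ((2*r)^d) := by
          calc volume (closedBall x r ∩ cube (zc k₀) (ℓ/4)) ≤ volume (cube x r) :=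
                measure_mono (fun y hy => closedBall_subset_cube x r hy.1)
            _ = (ENNReal.ofReal (2*r))^d := volume_cube x hr.le
            _ = ENNReal.ofReal ((2*r)^d) := by
                rw [← ENNReal.ofReal_pow (by linarith)]
        have hwb : w k₀ ≤ μ (gridHo d ℓ k₀) * 2 := by
          rw [hwdef]
          calc μ (gridHo d ℓ k₀) / M ≤ μ (gridHo d ℓ k₀) / (1/2) :=
                ENNReal.div_le_div_left hM2.le _
            _ = μ (gridHo d ℓ k₀) * 2 := by
                rw [one_div, div_eq_mul_inv, inv_inv]
        have hfrostD : phi s E * μ (gridHo d ℓ k₀) ≤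
            2 * ENNReal.ofReal (((Real.sqrt d + 1)*ℓ)^s) := by
          obtain ⟨y₀, hy₀⟩ := gridHo_nonempty hℓ0 k₀
          have hy₀E : y₀ ∈ E := ((hSmem k₀).1 hk₀S).1 (gridHo_subset_gridCl ℓ k₀ hy₀)
          have hDsub : gridHo d ℓ k₀ ⊆ closedBall y₀ ((Real.sqrt d + 1)*ℓ) := by
            intro p hp
            rw [mem_closedBall]
            calc dist p y₀ ≤ Real.sqrt d * ℓ :=
                gridCl_dist_le hℓ0 (gridHo_subset_gridCl ℓ k₀ hp)
                  (gridHo_subset_gridCl ℓ k₀ hy₀)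
              _ ≤ (Real.sqrt d + 1)*ℓ := by nlinarith
          calc phi s E * μ (gridHo d ℓ k₀)
              ≤ phi s E * μ (closedBall y₀ ((Real.sqrt d+1)*ℓ)) :=
                mul_le_mul_right (measure_mono hDsub) _
            _ ≤ 2 * ENNReal.ofReal (((Real.sqrt d+1)*ℓ)^s) :=
                hfrostμ y₀ hy₀E _ (by positivity)
        calc phi s E * ∑ k ∈ S', (w k / V) * volume (closedBall x r ∩ cube (zc k) (ℓ/4))
            ≤ phi s E * ((μ (gridHo d ℓ k₀) * 2 / V) * ENNReal.ofReal ((2*r)^d)) := by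
              apply mul_le_mul_right
              refine hsum_le.trans ?_
              exact mul_le_mul' (ENNReal.div_le_div_right hwb _) hvol
          _ = (phi s E * μ (gridHo d ℓ k₀)) * (2 * ENNReal.ofReal ((2*r)^d) / V) := by
              rw [div_eq_mul_inv, div_eq_mul_inv]
              ring
          _ ≤ (2 * ENNReal.ofReal (((Real.sqrt d+1)*ℓ)^s)) *
                (2 * ENNReal.ofReal ((2*r)^d) / V) := mul_le_mul_left hfrostD _
          _ ≤ ENNReal.ofReal κ₁ * ENNReal.ofReal (r^s) := by
              rw [hVval]
              have e2 : (2:ℝ≥0∞) = ENNReal.ofReal 2 := by norm_num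
              rw [e2, ← ENNReal.ofReal_mul (by norm_num : (0:ℝ) ≤ 2),
                ← ENNReal.ofReal_mul (by norm_num : (0:ℝ) ≤ 2),
                ← ENNReal.ofReal_div_of_pos (by positivity : (0:ℝ) < (ℓ/2)^d),
                ← ENNReal.ofReal_mul (by positivity),
                ← ENNReal.ofReal_mul hκ1.le]
              apply ENNReal.ofReal_le_ofReal
              have key := real_ineq_small (dd := d) hs hsle hℓ0 hr (by linarith : r ≤ ℓ)
              rw [hκdef]
              have hGnn : (0:ℝ) ≤ ((Real.sqrt d + 1)*ℓ)^s :=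
                Real.rpow_nonneg (by positivity) _
              calc 2 * ((Real.sqrt d+1)*ℓ)^s * (2 * (2*r)^d / (ℓ/2)^d)
                  = 4 * (((Real.sqrt d+1)*ℓ)^s * ((2*r)^d/(ℓ/2)^d)) := by ring
                _ ≤ 4 * (4^d * (1+4*Real.sqrt d)^s * r^s) := by linarith
                _ = 4 * 4^d * (1+4*Real.sqrt d)^s * r^s := by ring
      · -- large radius
        have hsum_le : ∑ k ∈ S', (w k / V) * volume (closedBall x r ∩ cube (zc k) (ℓ/4))
            ≤ ∑ k ∈ S', w k := by
          apply Finset.sum_le_sum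
          intro k _
          calc (w k / V) * volume (closedBall x r ∩ cube (zc k) (ℓ/4))
              ≤ (w k / V) * V := by
                apply mul_le_mul_right
                calc volume (closedBall x r ∩ cube (zc k) (ℓ/4))
                    ≤ volume (cube (zc k) (ℓ/4)) := measure_mono inter_subset_right
                  _ = V := by rw [volume_cube _ hℓ4.le, hVdef]
            _ = w k := ENNReal.div_mul_cancel hV0 hVtop
        have hSsum : ∑ k ∈ S', w k ≤ 2 * μ (closedBall x ((1+4*Real.sqrt d)*r)) := by
          have hUUsub : (⋃ k ∈ S', gridHo d ℓ k) ⊆ closedBall x ((1+4*Real.sqrt d)*r) := by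
            intro p hp
            rw [mem_iUnion₂] at hp
            obtain ⟨k, hkS', hpk⟩ := hp
            obtain ⟨pa, hpa⟩ := (Finset.mem_filter.1 hkS').2
            have hpaH : pa ∈ gridHo d ℓ k := hcubeHo k hpa.2
            rw [mem_closedBall]
            calc dist p x ≤ dist p pa + dist pa x := dist_triangle _ _ _
              _ ≤ Real.sqrt d * ℓ + r := by
                  apply add_le_add
                  · exact gridCl_dist_le hℓ0 (gridHo_subset_gridCl ℓ k hpk)
                      (gridHo_subset_gridCl ℓ k hpaH)
                  · exact mem_closedBall.1 hpa.1
              _ ≤ (1+4*Real.sqrt d)*r := by nlinarith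
          have hdisj' : (↑S' : Set (Fin d → ℤ)).PairwiseDisjoint (gridHo d ℓ) := by
            apply hdisjS.subset
            intro k hk
            rw [Finset.mem_coe, hS', Finset.mem_filter] at hk
            exact hk.1
          calc ∑ k ∈ S', w k = (∑ k ∈ S', μ (gridHo d ℓ k)) / M := by
                rw [hwdef]
                simp only [div_eq_mul_inv, ← Finset.sum_mul]
            _ = μ (⋃ k ∈ S', gridHo d ℓ k) / M := by
                rw [measure_biUnion_finset hdisj' (fun k _ => gridHo_measurable ℓ k)]
            _ ≤ μ (closedBall x ((1+4*Real.sqrt d)*r)) / M :=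
                ENNReal.div_le_div_right (measure_mono hUUsub) _
            _ ≤ μ (closedBall x ((1+4*Real.sqrt d)*r)) / (1/2) :=
                ENNReal.div_le_div_left hM2.le _
            _ = 2 * μ (closedBall x ((1+4*Real.sqrt d)*r)) := by
                rw [one_div, div_eq_mul_inv, inv_inv, mul_comm]
        calc phi s E * ∑ k ∈ S', (w k / V) * volume (closedBall x r ∩ cube (zc k) (ℓ/4))
            ≤ phi s E * (2 * μ (closedBall x ((1+4*Real.sqrt d)*r))) :=
              mul_le_mul_right (hsum_le.trans hSsum) _
          _ = 2 * (phi s E * μ (closedBall x ((1+4*Real.sqrt d)*r))) := by ring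
          _ ≤ 2 * (2 * ENNReal.ofReal (((1+4*Real.sqrt d)*r)^s)) := by
              apply mul_le_mul_right
              exact hfrostμ x hx _ (by positivity)
          _ ≤ ENNReal.ofReal κ₁ * ENNReal.ofReal (r^s) := by
              rw [← mul_assoc]
              have h2 : (2:ℝ≥0∞)*2 = ENNReal.ofReal 4 := by norm_num
              rw [h2, ← ENNReal.ofReal_mul (by norm_num : (0:ℝ) ≤ 4),
                ← ENNReal.ofReal_mul hκ1.le]
              apply ENNReal.ofReal_le_ofReal
              rw [Real.mul_rpow (by positivity) hr.le, hκdef]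
              have h6 : (0:ℝ) ≤ r^s := Real.rpow_nonneg hr.le _
              calc 4*((1+4*Real.sqrt d)^s * r^s)
                  ≤ 4^d*(4*((1+4*Real.sqrt d)^s * r^s)) :=
                    le_mul_of_one_le_left (by positivity) h4d
                _ = 4*4^d*(1+4*Real.sqrt d)^s*r^s := by ring
    -- package the cubes with a `Fin` index
    set n : ℕ := Sfin.card with hn
    set e : Fin n ≃ {k // k ∈ Sfin} := Sfin.equivFin.symm with he
    refine ⟨η, hηprob, hηdens,
      ⟨n, fun j => zc ((e j : {k // k ∈ Sfin}) : Fin d → ℤ), fun _ => ℓ/4,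
        fun _ => hℓ4, ?_, ?_, ?_⟩, ?_⟩
    · intro j
      exact hcubeE _ (e j).2
    · intro j j' hjj'
      apply hcubedisj
      intro hcc
      exact hjj' (e.injective (Subtype.ext hcc))
    · rw [hηsupp]
      ext y
      simp only [mem_iUnion, exists_prop]
      constructor
      · rintro ⟨k, hk, hy⟩
        refine ⟨e.symm ⟨k, hk⟩, ?_⟩
        rw [Equiv.apply_symm_apply]
        exact hy
      · rintro ⟨j, hy⟩
        exact ⟨(e j : Fin d → ℤ), (e j).2, hy⟩
    · exact phi_le_of_frostman hκ1 hfrostη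
end

section
/- Let s ≥ 0 and let E ⊆ ℝ^d be a bounded Borel set with φ^s(E) > 0. Let ε, η ∈ (0,1), and let μ be a Borel probability measure supported on E satisfying inf_{x∈E} inf_{r>0} r^s/μ(B_r(x)) > φ^s(E)(1−η). Let A be the set of points x ∈ E such that for all y ∈ E and r > 0, if x ∈ B_r(y) then μ(B_r(y)) < (1−ε) r^s/φ^s(E). Suppose c > 0 is a constant with the property that for every bounded Borel set K ⊆ ℝ^d with positive s-dimensional Hausdorff measure there exists a Borel probability measure m supported на K such that m(B_r(x)) ≤ r^s/(c · H^s_∞(K)) for all x ∈ ℝ^d and r > 0. Then H^s_∞(A) ≤ φ^s(E) / (c·(1 − ε + ε/η)). -/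
open MeasureTheory Metric Set Filter ENNReal
open Topology

/-- The `s`-dimensional Hausdorff content: infimum of `∑ (diam D_i)^s` over countable
covers of `A` by closed balls `D_i`. -/
noncomputable def hContent {X : Type*} [PseudoMetricSpace X] (s : ℝ) (A : Set X) : ℝ≥0∞ :=
  ⨅ (c : ℕ → X) (r : ℕ → ℝ) (_ : A ⊆ ⋃ n, closedBall (c n) (r n)),
    ∑' n, EMetric.diam (closedBall (c n) (r n)) ^ s

lemma hContent_mono {X : Type*} [PseudoMetricSpace X] (s : ℝ) {A B : Set X} (h : A ⊆ B) :
    hContent s A ≤ hContent s B := by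
  refine le_iInf fun c => le_iInf fun r => le_iInf fun hcov => ?_
  exact iInf_le_of_le c (iInf_le_of_le r (iInf_le_of_le (h.trans hcov) le_rfl))

lemma hContent_le_sum {X : Type*} [PseudoMetricSpace X] (s : ℝ) (A : Set X)
    (c : ℕ → X) (r : ℕ → ℝ) (hcov : A ⊆ ⋃ n, closedBall (c n) (r n)) :
    hContent s A ≤ ∑' n, EMetric.diam (closedBall (c n) (r n)) ^ s :=
  iInf_le_of_le c (iInf_le_of_le r (iInf_le_of_le hcov le_rfl))

lemma hContent_zero_exp {X : Type*} [PseudoMetricSpace X] (A : Set X) :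
    hContent 0 A = ∞ := by
  rw [hContent]
  simp only [ENNReal.rpow_zero]
  rw [iInf_eq_top]
  intro c
  rw [iInf_eq_top]
  intro r
  rw [iInf_eq_top]
  intro _
  exact ENNReal.tsum_const_eq_top_of_ne_zero one_ne_zero

lemma pos_hausdorff_of_pos_hContent {X : Type*} [MetricSpace X] [MeasurableSpace X]
    [BorelSpace X] [Nonempty X] {s : ℝ} (hs : 0 < s) {K : Set X}
    (h : 0 < hContent s K) : 0 < μH[s] K := by
  rcases eq_or_lt_of_le ((zero_le : 0 ≤ μH[s] K)) with hH | hH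
  · exfalso
    have h2s : ((2:ℝ≥0∞)) ^ s ≠ ∞ := by
      exact ENNReal.rpow_ne_top_of_nonneg hs.le (by norm_num)
    have h2s0 : ((2:ℝ≥0∞)) ^ s ≠ 0 := by
      simp [ENNReal.rpow_eq_zero_iff]
    set x := hContent s K / (2:ℝ≥0∞)^s with hx
    have hxpos : 0 < x := ENNReal.div_pos h.ne' h2s
    have hmeas := hH.symm
    rw [MeasureTheory.Measure.hausdorffMeasure_apply] at hmeas
    have hinf1 : (⨅ (t : ℕ → Set X) (_ : K ⊆ ⋃ n, t n) (_ : ∀ n, EMetric.diam (t n) ≤ 1),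
        ∑' n, ⨆ _ : (t n).Nonempty, EMetric.diam (t n) ^ s) = 0 := by
      refine le_antisymm ?_ zero_le
      rw [← hmeas]
      exact le_iSup₂ (f := fun (r : ℝ≥0∞) (_ : 0 < r) =>
        ⨅ (t : ℕ → Set X) (_ : K ⊆ ⋃ n, t n) (_ : ∀ n, EMetric.diam (t n) ≤ r),
          ∑' n, ⨆ _ : (t n).Nonempty, EMetric.diam (t n) ^ s) 1 zero_lt_one
    have hlt : (⨅ (t : ℕ → Set X) (_ : K ⊆ ⋃ n, t n) (_ : ∀ n, EMetric.diam (t n) ≤ 1),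
        ∑' n, ⨆ _ : (t n).Nonempty, EMetric.diam (t n) ^ s) < x := by
      rw [hinf1]; exact hxpos
    simp only [iInf_lt_iff] at hlt
    obtain ⟨t, hcov, hdiam, hsum⟩ := hlt
    classical
    set c : ℕ → X := fun n => if hn : (t n).Nonempty then hn.choose else Classical.arbitrary X
      with hc
    set r : ℕ → ℝ := fun n => if (t n).Nonempty then (EMetric.diam (t n)).toReal else -1 with hr
    have hdne : ∀ n, EMetric.diam (t n) ≠ ∞ :=
      fun n => ((hdiam n).trans_lt ENNReal.one_lt_top).ne
    have hcov' : K ⊆ ⋃ n, closedBall (c n) (r n) := by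
      intro y hy
      obtain ⟨n, hn⟩ := mem_iUnion.mp (hcov hy)
      have hne : (t n).Nonempty := ⟨y, hn⟩
      refine mem_iUnion.mpr ⟨n, ?_⟩
      rw [mem_closedBall, hr]
      simp only [hne, if_pos]
      have h1 : edist y (c n) ≤ EMetric.diam (t n) := by
        rw [hc]; simp only [hne, dif_pos]
        exact EMetric.edist_le_diam_of_mem hn hne.choose_spec
      rw [dist_edist]
      exact ENNReal.toReal_mono (hdne n) h1
    have hterm : ∀ n, EMetric.diam (closedBall (c n) (r n)) ^ s ≤
        (2:ℝ≥0∞)^s * ⨆ _ : (t n).Nonempty, EMetric.diam (t n) ^ s := by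
      intro n
      by_cases hne : (t n).Nonempty
      · rw [iSup_pos hne]
        have hrn : r n = (EMetric.diam (t n)).toReal := by rw [hr]; simp [hne]
        have hrpos : 0 ≤ r n := by rw [hrn]; exact ENNReal.toReal_nonneg
        have hd : EMetric.diam (closedBall (c n) (r n)) ≤ 2 * EMetric.diam (t n) := by
          rw [← Metric.emetric_closedBall hrpos]
          refine le_trans EMetric.diam_closedBall ?_
          rw [hrn, ENNReal.ofReal_toReal (hdne n)]
        calc EMetric.diam (closedBall (c n) (r n)) ^ s
            ≤ (2 * EMetric.diam (t n)) ^ s := ENNReal.rpow_le_rpow hd hs.le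
          _ = (2:ℝ≥0∞)^s * EMetric.diam (t n) ^ s :=
              ENNReal.mul_rpow_of_nonneg _ _ hs.le
      · have hrn : r n = -1 := by rw [hr]; simp [hne]
        have : closedBall (c n) (r n) = ∅ := by
          rw [hrn]; exact Metric.closedBall_eq_empty.mpr (by norm_num)
        rw [this, (show EMetric.diam (∅ : Set X) = 0 from EMetric.diam_empty), ENNReal.zero_rpow_of_pos hs]
        exact zero_le
    have hfinal : hContent s K < hContent s K := by
      calc hContent s K ≤ ∑' n, EMetric.diam (closedBall (c n) (r n)) ^ s :=
            hContent_le_sum s K c r hcov'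
        _ ≤ ∑' n, (2:ℝ≥0∞)^s * ⨆ _ : (t n).Nonempty, EMetric.diam (t n) ^ s :=
            ENNReal.tsum_le_tsum hterm
        _ = (2:ℝ≥0∞)^s * ∑' n, ⨆ _ : (t n).Nonempty, EMetric.diam (t n) ^ s :=
            ENNReal.tsum_mul_left
        _ < (2:ℝ≥0∞)^s * x := by
            exact (ENNReal.mul_lt_mul_iff_right h2s0 h2s).mpr hsum
        _ = hContent s K := by
            rw [hx, ENNReal.mul_div_cancel' (by simp [h2s0]) (by simp [h2s])]
    exact lt_irrefl _ hfinal
  · exact hH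


lemma ediv_lt_ediv {x a b : ℝ≥0∞} (hx0 : x ≠ 0) (hxt : x ≠ ∞) (hab : a < b) :
    x / b < x / a := by
  rw [div_eq_mul_inv, div_eq_mul_inv]
  exact (ENNReal.mul_lt_mul_iff_right hx0 hxt).mpr (ENNReal.inv_lt_inv.mpr hab)


/-- Lemma 2.2: under a near-optimality assumption on `μ` for `φ^s(E)` and a Frostman-type
property with constant `c`, the set `A` of points seen only by "light" balls has small
Hausdorff content: `H^s_∞(A) ≤ φ^s(E) / (c(1 - ε + ε/η))`. -/
theorem content_of_light_points_small
    (d : ℕ) (s : ℝ) (hs : 0 ≤ s)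
    (E : Set (EuclideanSpace ℝ (Fin d)))
    (hBdd : Bornology.IsBounded E) (hBorel : MeasurableSet E)
    (hphiPos : 0 < phi s E)
    (ε η : ℝ) (hε : ε ∈ Set.Ioo (0 : ℝ) 1) (hη : η ∈ Set.Ioo (0 : ℝ) 1)
    (μ : Measure (EuclideanSpace ℝ (Fin d)))
    (hprob : IsProbabilityMeasure μ) (hcarried : μ Eᶜ = 0)
    (hnearopt : phi s E * ENNReal.ofReal (1 - η) <
      ⨅ (x : EuclideanSpace ℝ (Fin d)) (_ : x ∈ E) (r : ℝ) (_ : 0 < r),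
        ENNReal.ofReal (r ^ s) / μ (closedBall x r))
    (A : Set (EuclideanSpace ℝ (Fin d)))
    (hA : A = {x | x ∈ E ∧ ∀ y ∈ E, ∀ r : ℝ, 0 < r → x ∈ closedBall y r →
      μ (closedBall y r) < ENNReal.ofReal ((1 - ε) * r ^ s) / phi s E})
    (c : ℝ) (hc : 0 < c)
    (hfrostman : ∀ K : Set (EuclideanSpace ℝ (Fin d)),
      Bornology.IsBounded K → MeasurableSet K → 0 < μH[s] K →
      ∃ m : Measure (EuclideanSpace ℝ (Fin d)), IsProbabilityMeasure m ∧ m Kᶜ = 0 ∧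
        ∀ (x : EuclideanSpace ℝ (Fin d)) (r : ℝ), 0 < r →
          m (closedBall x r) ≤ ENNReal.ofReal (r ^ s) / (ENNReal.ofReal c * hContent s K)) :
    hContent s A ≤ phi s E / ENNReal.ofReal (c * (1 - ε + ε / η)) := by
  obtain ⟨hε0, hε1⟩ := hε
  obtain ⟨hη0, hη1⟩ := hη
  -- E is nonempty
  have hE1 : μ E = 1 := by
    have h2 := measure_add_measure_compl (μ := μ) hBorel
    rw [hcarried, add_zero, measure_univ] at h2
    exact h2
  have hEne : E.Nonempty := nonempty_of_measure_ne_zero (by rw [hE1]; exact one_ne_zero)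
  obtain ⟨x₀, hx₀⟩ := hEne
  -- s = 0 is degenerate: hypotheses are contradictory
  rcases hs.eq_or_lt with hs0 | hs0
  · exfalso
    subst hs0
    obtain ⟨m, hmprob, -, hm⟩ := hfrostman {x₀} (Bornology.isBounded_singleton)
      (measurableSet_singleton x₀)
      (by rw [MeasureTheory.Measure.hausdorffMeasure_zero_singleton]; exact zero_lt_one)
    have hm0 : ∀ (x : EuclideanSpace ℝ (Fin d)) (r : ℝ), 0 < r → m (closedBall x r) = 0 := by
      intro x r hr
      have := hm x r hr
      rw [hContent_zero_exp, ENNReal.mul_top (by simp [ENNReal.ofReal_eq_zero]; linarith), ENNReal.div_top] at this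
      exact le_antisymm this zero_le
    have hcov : (univ : Set (EuclideanSpace ℝ (Fin d))) ⊆
        ⋃ n : ℕ, closedBall x₀ (n + 1) := by
      intro y _
      obtain ⟨n, hn⟩ := exists_nat_ge (dist y x₀)
      exact mem_iUnion.mpr ⟨n, by rw [mem_closedBall]; linarith⟩
    have : (1 : ℝ≥0∞) ≤ 0 := by
      calc (1:ℝ≥0∞) = m univ := hmprob.measure_univ.symm
        _ ≤ ∑' n : ℕ, m (closedBall x₀ (n + 1)) :=
            (measure_mono hcov).trans (measure_iUnion_le _)
        _ = 0 := by simp [hm0 x₀ _ (by positivity : (0:ℝ) < (_ : ℕ) + 1)]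
    simp at this
  -- main case 0 < s
  by_contra hcon
  have hGlt : phi s E / ENNReal.ofReal (c * (1 - ε + ε / η)) < hContent s A := not_le.mp hcon
  set φ := phi s E with hφdef
  have hφ0 : φ ≠ 0 := hphiPos.ne'
  obtain ⟨R, hR0, hER⟩ := hBdd.subset_closedBall_lt 0 x₀
  have hφtop : φ ≠ ∞ := by
    have hub : φ ≤ ENNReal.ofReal (R ^ s) := by
      refine iSup_le fun ν => iSup_le fun hν => iSup_le fun hνc => ?_
      have hνE : ν (closedBall x₀ R) = 1 := by
        have h1 : ν E = 1 := by
          have h2 := measure_add_measure_compl (μ := ν) hBorel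
          rw [hνc, add_zero, measure_univ] at h2
          exact h2
        refine le_antisymm ((measure_mono (subset_univ _)).trans (by rw [measure_univ])) ?_
        rw [← h1]; exact measure_mono hER
      refine le_trans (iInf_le_of_le x₀ (iInf_le_of_le hx₀
        (iInf_le_of_le R (iInf_le_of_le hR0 le_rfl)))) ?_
      rw [hνE, div_one]
    exact (hub.trans_lt ENNReal.ofReal_lt_top).ne
  set I := ⨅ (x : EuclideanSpace ℝ (Fin d)) (_ : x ∈ E) (r : ℝ) (_ : 0 < r),
      ENNReal.ofReal (r ^ s) / μ (closedBall x r) with hIdef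
  have hI0 : I ≠ 0 := by
    refine (lt_of_le_of_lt zero_le hnearopt).ne'
  have hrs : ∀ r : ℝ, 0 < r → ENNReal.ofReal (r ^ s) ≠ 0 :=
    fun r hr => (ENNReal.ofReal_pos.mpr (Real.rpow_pos_of_pos hr s)).ne'
  have hμb : ∀ x ∈ E, ∀ r : ℝ, 0 < r →
      μ (closedBall x r) ≤ ENNReal.ofReal (r ^ s) / I := by
    intro x hx r hr
    have h1 : I ≤ ENNReal.ofReal (r ^ s) / μ (closedBall x r) :=
      iInf_le_of_le x (iInf_le_of_le hx (iInf_le_of_le r (iInf_le_of_le hr le_rfl)))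
    have h2 : I * μ (closedBall x r) ≤ ENNReal.ofReal (r ^ s) :=
      (ENNReal.le_div_iff_mul_le (Or.inr (hrs r hr))
        (Or.inl (measure_ne_top μ _))).mp h1
    exact (ENNReal.le_div_iff_mul_le (Or.inl hI0)
      (Or.inr ENNReal.ofReal_ne_top)).mpr (by rw [mul_comm]; exact h2)
  -- the open union of heavy balls
  set V := ⋃ (y : EuclideanSpace ℝ (Fin d)) (_ : y ∈ E) (r : ℝ) (_ : 0 < r)
      (_ : ¬ μ (closedBall y r) < ENNReal.ofReal ((1 - ε) * r ^ s) / φ),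
      ball y r with hVdef
  have hVopen : IsOpen V := isOpen_iUnion fun y => isOpen_iUnion fun _ =>
    isOpen_iUnion fun r => isOpen_iUnion fun _ => isOpen_iUnion fun _ => isOpen_ball
  set K := E \ V with hKdef
  have hKE : K ⊆ E := diff_subset
  have hAK : A ⊆ K := by
    intro x hx
    rw [hA] at hx
    refine ⟨hx.1, fun hxV => ?_⟩
    simp only [hVdef, mem_iUnion] at hxV
    obtain ⟨y, hy, r, hr, hheavy, hball⟩ := hxV
    exact hheavy (hx.2 y hy r hr (ball_subset_closedBall hball))
  have hKcont : φ / ENNReal.ofReal (c * (1 - ε + ε / η)) < hContent s K :=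
    hGlt.trans_le (hContent_mono s hAK)
  have hGpos : 0 < φ / ENNReal.ofReal (c * (1 - ε + ε / η)) :=
    ENNReal.div_pos hφ0 ENNReal.ofReal_ne_top
  obtain ⟨m, hmprob, hmK, hmfrost⟩ := hfrostman K (hBdd.subset hKE)
    (hBorel.diff hVopen.measurableSet)
    (pos_hausdorff_of_pos_hContent hs0 (hGpos.trans hKcont))
  obtain ⟨b, hGb, hbH⟩ := exists_between hKcont
  -- the competitor measure
  set ν := ENNReal.ofReal η • m + ENNReal.ofReal (1 - η) • μ with hνdef
  have hνapp : ∀ S : Set (EuclideanSpace ℝ (Fin d)),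
      ν S = ENNReal.ofReal η * m S + ENNReal.ofReal (1 - η) * μ S := by
    intro S
    simp [hνdef, Measure.add_apply, Measure.smul_apply, smul_eq_mul]
  have hνprob : IsProbabilityMeasure ν := by
    constructor
    rw [hνapp, measure_univ, measure_univ, mul_one, mul_one,
      ← ENNReal.ofReal_add hη0.le (by linarith)]
    norm_num
  have hνc : ν Eᶜ = 0 := by
    have hmE : m Eᶜ = 0 := measure_mono_null (compl_subset_compl.mpr hKE) hmK
    rw [hνapp, hmE, hcarried, mul_zero, mul_zero, add_zero]
  -- the constants
  set κ₁ := ENNReal.ofReal η * (φ / (ENNReal.ofReal c * b)) +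
      ENNReal.ofReal ((1 - η) * (1 - ε)) with hκ₁def
  set κ₂ := ENNReal.ofReal (1 - η) * φ / I with hκ₂def
  set κ := max κ₁ κ₂ with hκdef
  have hT0 : (0:ℝ) < 1 - ε + ε / η := by
    have : (0:ℝ) < ε / η := div_pos hε0 hη0
    linarith
  have hcT : ENNReal.ofReal (c * (1 - ε + ε / η)) =
      ENNReal.ofReal c * ENNReal.ofReal (1 - ε + ε / η) :=
    ENNReal.ofReal_mul hc.le
  have hstep : φ / ENNReal.ofReal (1 - ε + ε / η) < ENNReal.ofReal c * b := by
    have h1 : ENNReal.ofReal c * (φ / ENNReal.ofReal (c * (1 - ε + ε / η))) =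
        φ / ENNReal.ofReal (1 - ε + ε / η) := by
      rw [hcT, ← mul_div_assoc, ENNReal.mul_div_mul_left φ _ (by simp [ENNReal.ofReal_eq_zero]; linarith) ENNReal.ofReal_ne_top]
    calc φ / ENNReal.ofReal (1 - ε + ε / η)
        = ENNReal.ofReal c * (φ / ENNReal.ofReal (c * (1 - ε + ε / η))) := h1.symm
      _ < ENNReal.ofReal c * b := by
          exact (ENNReal.mul_lt_mul_iff_right (by simp [ENNReal.ofReal_eq_zero]; linarith)
            ENNReal.ofReal_ne_top).mpr hGb
  have hκ₁lt : κ₁ < 1 := by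
    have hTne0 : ENNReal.ofReal (1 - ε + ε / η) ≠ 0 := by
      simp [ENNReal.ofReal_eq_zero]; linarith
    have hq : φ / (ENNReal.ofReal c * b) < ENNReal.ofReal (1 - ε + ε / η) := by
      have h2 : φ / (φ / ENNReal.ofReal (1 - ε + ε / η)) =
          ENNReal.ofReal (1 - ε + ε / η) := by
        rw [div_eq_mul_inv, ENNReal.inv_div (Or.inl ENNReal.ofReal_ne_top) (Or.inl hTne0),
          ← mul_div_assoc, mul_comm, mul_div_assoc, ENNReal.div_self hφ0 hφtop, mul_one]
      calc φ / (ENNReal.ofReal c * b)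
          < φ / (φ / ENNReal.ofReal (1 - ε + ε / η)) := ediv_lt_ediv hφ0 hφtop hstep
        _ = ENNReal.ofReal (1 - ε + ε / η) := h2
    calc κ₁ < ENNReal.ofReal η * ENNReal.ofReal (1 - ε + ε / η) +
          ENNReal.ofReal ((1 - η) * (1 - ε)) := by
          refine ENNReal.add_lt_add_right ENNReal.ofReal_ne_top ?_
          exact (ENNReal.mul_lt_mul_iff_right (by simp [ENNReal.ofReal_eq_zero]; linarith)
            ENNReal.ofReal_ne_top).mpr hq
      _ = 1 := by
          rw [← ENNReal.ofReal_mul hη0.le, ← ENNReal.ofReal_add (by nlinarith) (by nlinarith)]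
          have : η * (1 - ε + ε / η) + (1 - η) * (1 - ε) = 1 := by
            field_simp
            ring
          rw [this, ENNReal.ofReal_one]
  have hκ₂lt : κ₂ < 1 := by
    rcases eq_or_ne I ∞ with hItop | hItop
    · rw [hκ₂def, hItop, ENNReal.div_top]; exact zero_lt_one
    · rw [hκ₂def]
      refine (ENNReal.div_lt_iff (Or.inl hI0) (Or.inr (ENNReal.mul_ne_top
        ENNReal.ofReal_ne_top hφtop))).mpr ?_
      rw [one_mul, mul_comm]
      exact hnearopt
  have hκ1 : κ < 1 := max_lt hκ₁lt hκ₂lt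
  have hκtop : κ ≠ ∞ := (hκ1.trans ENNReal.one_lt_top).ne
  have hκ0 : κ ≠ 0 := by
    have : (0:ℝ≥0∞) < κ₁ :=
      lt_of_lt_of_le (ENNReal.ofReal_pos.mpr (by nlinarith)) le_add_self
    exact (this.trans_le (le_max_left _ _)).ne'
  have hφc : φ * φ⁻¹ = 1 := ENNReal.mul_inv_cancel hφ0 hφtop
  have hVK : V ⊆ Kᶜ := fun z hz hzK => hzK.2 hz
  -- main pointwise bound
  have hbound : ∀ x ∈ E, ∀ r : ℝ, 0 < r →
      ν (closedBall x r) ≤ κ * (ENNReal.ofReal (r ^ s) / φ) := by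
    intro x hx r hr
    have key : ∀ r' : ℝ, r < r' → ν (closedBall x r) ≤ κ * (ENNReal.ofReal (r' ^ s) / φ) := by
      intro r' hr'
      set r'' := (r + r') / 2 with hr''def
      have hrr'' : r < r'' := by rw [hr''def]; linarith
      have hr''r' : r'' ≤ r' := by rw [hr''def]; linarith
      have hr''0 : 0 < r'' := hr.trans hrr''
      have hmono : ENNReal.ofReal (r'' ^ s) ≤ ENNReal.ofReal (r' ^ s) :=
        ENNReal.ofReal_le_ofReal (Real.rpow_le_rpow hr''0.le hr''r' hs)
      have hmono' : ENNReal.ofReal (r ^ s) ≤ ENNReal.ofReal (r' ^ s) :=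
        ENNReal.ofReal_le_ofReal (Real.rpow_le_rpow hr.le (by linarith) hs)
      by_cases hlight : μ (closedBall x r'') < ENNReal.ofReal ((1 - ε) * r'' ^ s) / φ
      · -- light ball of radius r''
        have hmb : m (closedBall x r'') ≤
            ENNReal.ofReal (r'' ^ s) / (ENNReal.ofReal c * b) :=
          (hmfrost x r'' hr''0).trans
            (ENNReal.div_le_div_left (mul_le_mul_right hbH.le _) _)
        have e1 : φ / (ENNReal.ofReal c * b) * (ENNReal.ofReal (r'' ^ s) / φ) =
            ENNReal.ofReal (r'' ^ s) / (ENNReal.ofReal c * b) := by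
          rw [div_eq_mul_inv, div_eq_mul_inv, div_eq_mul_inv]
          calc φ * (ENNReal.ofReal c * b)⁻¹ * (ENNReal.ofReal (r'' ^ s) * φ⁻¹)
              = ENNReal.ofReal (r'' ^ s) * (ENNReal.ofReal c * b)⁻¹ * (φ * φ⁻¹) := by ring
            _ = ENNReal.ofReal (r'' ^ s) * (ENNReal.ofReal c * b)⁻¹ := by rw [hφc, mul_one]
        have e2 : ENNReal.ofReal ((1 - η) * (1 - ε)) * (ENNReal.ofReal (r'' ^ s) / φ) =
            ENNReal.ofReal (1 - η) * (ENNReal.ofReal ((1 - ε) * r'' ^ s) / φ) := by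
          rw [ENNReal.ofReal_mul (by linarith : (0:ℝ) ≤ 1 - η),
            ENNReal.ofReal_mul (by linarith : (0:ℝ) ≤ 1 - ε), mul_assoc, mul_div_assoc]
        calc ν (closedBall x r)
            ≤ ν (closedBall x r'') := measure_mono (closedBall_subset_closedBall hrr''.le)
          _ = ENNReal.ofReal η * m (closedBall x r'') +
              ENNReal.ofReal (1 - η) * μ (closedBall x r'') := hνapp _
          _ ≤ ENNReal.ofReal η * (ENNReal.ofReal (r'' ^ s) / (ENNReal.ofReal c * b)) +
              ENNReal.ofReal (1 - η) * (ENNReal.ofReal ((1 - ε) * r'' ^ s) / φ) :=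
              add_le_add (mul_le_mul_right hmb _) (mul_le_mul_right hlight.le _)
          _ = κ₁ * (ENNReal.ofReal (r'' ^ s) / φ) := by
              rw [hκ₁def, add_mul, mul_assoc, e1, e2]
          _ ≤ κ * (ENNReal.ofReal (r' ^ s) / φ) :=
              mul_le_mul' (le_max_left _ _) (ENNReal.div_le_div hmono le_rfl)
      · -- heavy ball of radius r''
        have hballV : ball x r'' ⊆ V := by
          intro z hz
          simp only [hVdef, mem_iUnion]
          exact ⟨x, hx, r'', hr''0, hlight, hz⟩
        have hm0 : m (closedBall x r) = 0 :=
          measure_mono_null (((closedBall_subset_ball hrr'').trans hballV).trans hVK) hmK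
        have e3 : κ₂ * (ENNReal.ofReal (r ^ s) / φ) =
            ENNReal.ofReal (1 - η) * (ENNReal.ofReal (r ^ s) / I) := by
          rw [hκ₂def, div_eq_mul_inv, div_eq_mul_inv, div_eq_mul_inv]
          calc ENNReal.ofReal (1 - η) * φ * I⁻¹ * (ENNReal.ofReal (r ^ s) * φ⁻¹)
              = ENNReal.ofReal (1 - η) * (ENNReal.ofReal (r ^ s) * I⁻¹) * (φ * φ⁻¹) := by ring
            _ = ENNReal.ofReal (1 - η) * (ENNReal.ofReal (r ^ s) * I⁻¹) := by
                rw [hφc, mul_one]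
        calc ν (closedBall x r)
            = ENNReal.ofReal η * m (closedBall x r) +
              ENNReal.ofReal (1 - η) * μ (closedBall x r) := hνapp _
          _ = ENNReal.ofReal (1 - η) * μ (closedBall x r) := by rw [hm0, mul_zero, zero_add]
          _ ≤ ENNReal.ofReal (1 - η) * (ENNReal.ofReal (r ^ s) / I) :=
              mul_le_mul_right (hμb x hx r hr) _
          _ = κ₂ * (ENNReal.ofReal (r ^ s) / φ) := e3.symm
          _ ≤ κ * (ENNReal.ofReal (r' ^ s) / φ) :=
              mul_le_mul' (le_max_right _ _) (ENNReal.div_le_div hmono' le_rfl)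
    -- pass to the limit r' → r
    have h1 : Tendsto (fun n : ℕ => r + 1 / ((n : ℝ) + 1)) atTop (𝓝 r) := by
      have h0 := tendsto_one_div_add_atTop_nhds_zero_nat (𝕜 := ℝ)
      have := tendsto_const_nhds (x := r) (f := atTop (α := ℕ)) |>.add h0
      simpa using this
    have h2 : Tendsto (fun n : ℕ => (r + 1 / ((n : ℝ) + 1)) ^ s) atTop (𝓝 (r ^ s)) :=
      (Real.continuousAt_rpow_const r s (Or.inl hr.ne')).tendsto.comp h1
    have h3 : Tendsto (fun n : ℕ => ENNReal.ofReal ((r + 1 / ((n : ℝ) + 1)) ^ s)) atTop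
        (𝓝 (ENNReal.ofReal (r ^ s))) := (ENNReal.continuous_ofReal.tendsto _).comp h2
    have h4 := ENNReal.Tendsto.mul_const h3
      (Or.inr (ENNReal.inv_ne_top.mpr hφ0) :
        ENNReal.ofReal (r ^ s) ≠ 0 ∨ φ⁻¹ ≠ ∞)
    have h5 := ENNReal.Tendsto.const_mul h4 (Or.inr hκtop :
      ENNReal.ofReal (r ^ s) * φ⁻¹ ≠ 0 ∨ κ ≠ ∞)
    have h6 : Tendsto (fun n : ℕ => κ * (ENNReal.ofReal ((r + 1 / ((n : ℝ) + 1)) ^ s) / φ))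
        atTop (𝓝 (κ * (ENNReal.ofReal (r ^ s) / φ))) := by
      simpa only [div_eq_mul_inv] using h5
    exact ge_of_tendsto h6 (Eventually.of_forall fun n =>
      key _ (lt_add_of_pos_right r (by positivity)))
  -- conclude
  have hup : (⨅ (x : EuclideanSpace ℝ (Fin d)) (_ : x ∈ E) (r : ℝ) (_ : 0 < r),
      ENNReal.ofReal (r ^ s) / ν (closedBall x r)) ≤ φ := by
    rw [hφdef, phi]
    exact le_iSup_of_le ν (by rw [iSup_pos hνprob, iSup_pos hνc])
  have hlow : φ / κ ≤ ⨅ (x : EuclideanSpace ℝ (Fin d)) (_ : x ∈ E) (r : ℝ) (_ : 0 < r),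
      ENNReal.ofReal (r ^ s) / ν (closedBall x r) := by
    refine le_iInf fun x => le_iInf fun hx => le_iInf fun r => le_iInf fun hr => ?_
    have h1 := hbound x hx r hr
    have hX0 : ENNReal.ofReal (r ^ s) ≠ 0 := hrs r hr
    have hXt : ENNReal.ofReal (r ^ s) ≠ ∞ := ENNReal.ofReal_ne_top
    have h2 : ENNReal.ofReal (r ^ s) / (κ * (ENNReal.ofReal (r ^ s) / φ)) = φ / κ := by
      have hXc : ENNReal.ofReal (r ^ s) * (ENNReal.ofReal (r ^ s))⁻¹ = 1 :=
        ENNReal.mul_inv_cancel hX0 hXt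
      have hκinv : (κ * (ENNReal.ofReal (r ^ s) / φ))⁻¹ =
          κ⁻¹ * (φ / ENNReal.ofReal (r ^ s)) := by
        rw [ENNReal.mul_inv (Or.inl hκ0) (Or.inl hκtop),
          ENNReal.inv_div (Or.inr hXt) (Or.inr hX0)]
      rw [div_eq_mul_inv, hκinv, div_eq_mul_inv φ (ENNReal.ofReal (r ^ s)),
        div_eq_mul_inv φ κ]
      calc ENNReal.ofReal (r ^ s) * (κ⁻¹ * (φ * (ENNReal.ofReal (r ^ s))⁻¹))
          = φ * κ⁻¹ * (ENNReal.ofReal (r ^ s) * (ENNReal.ofReal (r ^ s))⁻¹) := by ring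
        _ = φ * κ⁻¹ := by rw [hXc, mul_one]
    rw [← h2]
    exact ENNReal.div_le_div_left h1 _
  have hfin : φ < φ := by
    calc φ = φ / 1 := (div_one φ).symm
      _ < φ / κ := ediv_lt_ediv hφ0 hφtop hκ1
      _ ≤ φ := hlow.trans hup
  exact lt_irrefl φ hfin
end

section
/- There exists a countable family (B_i) of non-degenerate closed intervals contained in [0,1] such that the Lebesgue measure of limsup_{i→∞} B_i is positive, and yet for every a > 1 the following holds: if for each i the set E_i is defined as the closed interval with the same center as B_i and length (diam B_i)^a, then limsup_{i→∞} E_i = ∅. -/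
open MeasureTheory Metric Set Filter ENNReal

namespace PMNS

def Lf (t : ℕ) : ℕ := (t + 5)^2
def sf (t : ℕ) : ℕ := t + 5
noncomputable def rt (t : ℕ) : ℝ := (1/2:ℝ)^(Lf t + 1)
noncomputable def et (t : ℕ) : ℝ := (1/2:ℝ)^(Lf t + sf t)
noncomputable def ct (t k : ℕ) : ℝ := (2*k+1) * (1/2:ℝ)^(Lf t + 1)

def Inc (t k : ℕ) : Prop :=
  k = 0 ∨ ∀ u < t, ∀ k' < 2^(Lf u), rt t ≤ et u → |ct t k - ct u k'| > et u

def Ot (t : ℕ) : ℕ := ∑ u ∈ Finset.range t, 2^(Lf u)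
def st (i : ℕ) : ℕ := Nat.findGreatest (fun t => Ot t ≤ i) i
def kt (i : ℕ) : ℕ := i - Ot (st i)

open scoped Classical in
noncomputable def xc (i : ℕ) : ℝ :=
  if Inc (st i) (kt i) then ct (st i) (kt i) else ct (st i) 0
noncomputable def rad (i : ℕ) : ℝ := rt (st i)

lemma Lf_strictMono : StrictMono Lf := fun a b h => by
  dsimp [Lf]; exact Nat.pow_lt_pow_left (by omega) (by omega)

lemma Ot_succ (t : ℕ) : Ot (t+1) = Ot t + 2^(Lf t) := Finset.sum_range_succ _ t

lemma Ot_mono : Monotone Ot := by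
  intro a b h
  exact Finset.sum_le_sum_of_subset (Finset.range_subset_range.mpr h)

lemma self_le_Ot (t : ℕ) : t ≤ Ot t := by
  induction t with
  | zero => simp [Ot]
  | succ n ih => rw [Ot_succ]; have := Nat.one_le_two_pow (n := Lf n); omega

lemma Ot_st_le (i : ℕ) : Ot (st i) ≤ i := by
  have h0 : Ot 0 ≤ i := by simp [Ot]
  exact Nat.findGreatest_spec (P := fun t => Ot t ≤ i) (Nat.zero_le i) h0

lemma lt_Ot_st_succ (i : ℕ) : i < Ot (st i + 1) := by
  by_cases h : st i + 1 ≤ i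
  · have h2 := Nat.findGreatest_is_greatest (P := fun t => Ot t ≤ i) (Nat.lt_succ_self (st i)) h
    simp only [not_le] at h2
    exact h2
  · have hsti : st i ≤ i := Nat.findGreatest_le i
    have heq : st i = i := by omega
    rw [heq]
    have := self_le_Ot (i + 1)
    omega

lemma kt_lt (i : ℕ) : kt i < 2^(Lf (st i)) := by
  have h1 := Ot_st_le i
  have h2 := lt_Ot_st_succ i
  rw [Ot_succ] at h2
  dsimp [kt]; omega

lemma st_Ot_add (t k : ℕ) (hk : k < 2^(Lf t)) : st (Ot t + k) = t := by
  have hle : t ≤ st (Ot t + k) := by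
    apply Nat.le_findGreatest
    · exact le_trans (self_le_Ot t) (Nat.le_add_right _ _)
    · exact Nat.le_add_right _ _
  have hge : st (Ot t + k) ≤ t := by
    by_contra h
    push_neg at h
    have h1 : Ot (t+1) ≤ Ot (st (Ot t + k)) := Ot_mono h
    have h2 := Ot_st_le (Ot t + k)
    rw [Ot_succ] at h1
    omega
  omega

lemma kt_Ot_add (t k : ℕ) (hk : k < 2^(Lf t)) : kt (Ot t + k) = k := by
  dsimp [kt]; rw [st_Ot_add t k hk]; omega

lemma st_ge (i M : ℕ) (h : Ot M ≤ i) : M ≤ st i :=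
  Nat.le_findGreatest (le_trans (self_le_Ot M) h) h

lemma half_pow_eq_rpow (n : ℕ) : (1/2:ℝ)^n = (2:ℝ) ^ (-(n:ℝ)) := by
  rw [Real.rpow_neg (by norm_num), Real.rpow_natCast]
  simp [one_div, inv_pow]

lemma rpow_le_rpow_iff_exp {x y : ℝ} : (2:ℝ)^x ≤ (2:ℝ)^y ↔ x ≤ y :=
  Real.rpow_le_rpow_left_iff one_lt_two

lemma rpow_lt_rpow_iff_exp {x y : ℝ} : (2:ℝ)^x < (2:ℝ)^y ↔ x < y :=
  Real.rpow_lt_rpow_left_iff one_lt_two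

lemma center_sep {u t : ℕ} (h : u < t) (k k' : ℕ) :
    (1/2:ℝ)^(Lf t + 1) ≤ |ct u k - ct t k'| := by
  have hL : Lf u < Lf t := Lf_strictMono h
  set Lu := Lf u; set Lt := Lf t
  set d : ℕ := Lt - Lu with hd
  have hd1 : 1 ≤ d := by omega
  have hsplit : (1/2:ℝ)^(Lu+1) = (2:ℝ)^d * (1/2)^(Lt+1) := by
    have h2 : (1/2:ℝ)^(Lt+1) = (1/2)^d * (1/2)^(Lu+1) := by
      rw [← pow_add]; congr 1; omega
    rw [h2, ← mul_assoc, ← mul_pow]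
    norm_num
  set m : ℤ := (2*k+1) * 2^d - (2*k'+1) with hm
  have hmodd : Odd m := by
    obtain ⟨e, he⟩ : ∃ e, d = e + 1 := ⟨d - 1, by omega⟩
    exact ⟨(2*k+1)*2^e - k' - 1, by rw [hm, he]; ring⟩
  have hmne : m ≠ 0 := by
    intro h0; rw [h0] at hmodd; exact (Int.not_odd_iff_even.mpr Even.zero) hmodd
  have habs : 1 ≤ |(m:ℝ)| := by
    have := Int.one_le_abs hmne
    calc (1:ℝ) = ((1:ℤ):ℝ) := by norm_num
    _ ≤ ((|m|:ℤ):ℝ) := by exact_mod_cast this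
    _ = |(m:ℝ)| := by push_cast; ring
  have heq : ct u k - ct t k' = (m:ℝ) * (1/2)^(Lt+1) := by
    rw [ct, ct, hsplit, hm]
    push_cast
    ring
  rw [heq, abs_mul, abs_of_pos (by positivity : (0:ℝ) < (1/2:ℝ)^(Lt+1))]
  nlinarith [pow_pos (by norm_num : (0:ℝ) < 1/2) (Lt+1)]

/-- an "actual center" at stage `t` -/
def goodc (t : ℕ) (c : ℝ) : Prop :=
  c = ct t 0 ∨ ∃ k, k < 2^(Lf t) ∧ k ≠ 0 ∧ c = ct t k ∧
    (∀ u < t, ∀ k' < 2^(Lf u), rt t ≤ et u → |ct t k - ct u k'| > et u)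

lemma goodc_center {t : ℕ} {c : ℝ} (h : goodc t c) : ∃ k, k < 2^(Lf t) ∧ c = ct t k := by
  rcases h with h | ⟨k, hk, _, hck, _⟩
  · exact ⟨0, pow_pos (by norm_num) _, h⟩
  · exact ⟨k, hk, hck⟩

lemma xc_good (i : ℕ) : goodc (st i) (xc i) := by
  rw [xc]
  split_ifs with h
  · by_cases hk0 : kt i = 0
    · left; rw [hk0]
    · right
      rcases h with h | h
      · exact absurd h hk0
      · exact ⟨kt i, kt_lt i, hk0, rfl, h⟩
  · left; rfl

lemma E_rad_eq {t : ℕ} (a : ℝ) : (2 * rt t)^a = (2:ℝ)^(-(Lf t:ℝ) * a) := by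
  have h1 : 2 * rt t = (1/2:ℝ)^(Lf t) := by
    rw [rt, pow_succ]; ring
  rw [h1, half_pow_eq_rpow, ← Real.rpow_mul (by norm_num : (0:ℝ) ≤ 2)]

lemma key {a : ℝ} (ha : 1 < a) {u t : ℕ} (hut : u < t)
    (hau : (sf u : ℝ) + 1 ≤ (Lf u : ℝ) * (a - 1))
    {cu ctt x : ℝ} (hgu : goodc u cu) (hgt : goodc t ctt)
    (h1 : |x - cu| ≤ (2 * rt u)^a / 2) (h2 : |x - ctt| ≤ (2 * rt t)^a / 2) : False := by
  obtain ⟨k', hk', hcu⟩ := goodc_center hgu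
  set Au : ℝ := (2:ℝ)^(-(Lf u:ℝ) * a) with hAu
  set At : ℝ := (2:ℝ)^(-(Lf t:ℝ) * a) with hAt
  have hLut : (Lf u : ℝ) < Lf t := by exact_mod_cast Lf_strictMono hut
  have hAtu : At < Au := by
    rw [hAt, hAu, rpow_lt_rpow_iff_exp]
    nlinarith
  have hdist : |cu - ctt| < Au := by
    have h3 : |cu - ctt| ≤ |cu - x| + |x - ctt| := abs_sub_le cu x ctt
    rw [abs_sub_comm cu x] at h3
    rw [E_rad_eq a] at h1 h2
    rw [← hAu] at h1; rw [← hAt] at h2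
    linarith
  have hau2 : (Lf u:ℝ) + sf u + 1 ≤ (Lf u:ℝ) * a := by linarith
  have hsf5 : (5:ℝ) ≤ (sf u : ℝ) := by
    have : 5 ≤ sf u := by simp [sf]
    exact_mod_cast this
  have hetAu : Au ≤ et u := by
    rw [et, half_pow_eq_rpow, hAu, rpow_le_rpow_iff_exp]
    push_cast
    linarith
  rcases hgt with hc0 | ⟨k, hk, hk0, hck, hsep⟩
  · have hcu_lb : (1/2:ℝ)^(Lf u + 1) ≤ cu := by
      rw [hcu, ct]
      nlinarith [pow_pos (by norm_num : (0:ℝ) < 1/2) (Lf u + 1),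
        (by positivity : (0:ℝ) ≤ (k':ℝ))]
    have hctt_ub : ctt ≤ (1/2:ℝ)^(Lf u + 2) := by
      rw [hc0, ct]
      have := pow_le_pow_of_le_one (by norm_num : (0:ℝ) ≤ 1/2) (by norm_num)
        (by have := Lf_strictMono hut; omega : Lf u + 2 ≤ Lf t + 1)
      push_cast
      nlinarith [this]
    have hhalf : (1/2:ℝ)^(Lf u + 1) = 2 * (1/2:ℝ)^(Lf u + 2) := by
      rw [pow_succ]; ring
    have hAu2 : Au ≤ (1/2:ℝ)^(Lf u + 2) := by
      rw [half_pow_eq_rpow, hAu, rpow_le_rpow_iff_exp]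
      push_cast
      linarith
    have : cu - ctt ≤ |cu - ctt| := le_abs_self _
    nlinarith
  · by_cases hre : rt t ≤ et u
    · have hs := hsep u hut k' hk' hre
      rw [← hck, ← hcu, abs_sub_comm] at hs
      linarith
    · push_neg at hre
      have hcs := center_sep hut k' k
      rw [← hcu, ← hck] at hcs
      rw [← rt] at hcs
      linarith

/-- the union of the removed balls -/
noncomputable def RR : Set ℝ :=
  ⋃ t, ⋃ k ∈ Finset.range (2^(Lf t)), Metric.closedBall (ct t k) (2 * et t)

lemma et_pos (t : ℕ) : 0 < et t := by rw [et]; positivity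
lemma rt_pos (t : ℕ) : 0 < rt t := by rw [rt]; positivity

lemma vol_RR : volume RR ≤ ENNReal.ofReal (1/4) := by
  have hstage : ∀ t : ℕ,
      volume (⋃ k ∈ Finset.range (2^(Lf t)), Metric.closedBall (ct t k) (2 * et t))
        ≤ ENNReal.ofReal (4 * (1/2:ℝ)^(sf t)) := by
    intro t
    calc volume (⋃ k ∈ Finset.range (2^(Lf t)), Metric.closedBall (ct t k) (2 * et t))
        ≤ ∑ k ∈ Finset.range (2^(Lf t)), volume (Metric.closedBall (ct t k) (2 * et t)) :=
          measure_biUnion_finset_le _ _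
      _ = ∑ k ∈ Finset.range (2^(Lf t)), ENNReal.ofReal (4 * et t) := by
          apply Finset.sum_congr rfl
          intro k _
          rw [Real.volume_closedBall]
          ring_nf
      _ = (2^(Lf t) : ℕ) * ENNReal.ofReal (4 * et t) := by
          rw [Finset.sum_const, Finset.card_range, nsmul_eq_mul]
      _ = ENNReal.ofReal ((2:ℝ)^(Lf t) * (4 * et t)) := by
          rw [← ENNReal.ofReal_natCast (2^(Lf t)),
            ← ENNReal.ofReal_mul (by positivity : (0:ℝ) ≤ ((2^(Lf t):ℕ):ℝ))]
          congr 1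
          push_cast
          ring
      _ = ENNReal.ofReal (4 * (1/2:ℝ)^(sf t)) := by
          congr 1
          rw [et, pow_add]
          have h2 : (2:ℝ)^(Lf t) * (1/2)^(Lf t) = 1 := by
            rw [← mul_pow]; norm_num
          linear_combination (4 * (1/2:ℝ)^(sf t)) * h2
  have hsum : Summable (fun t : ℕ => 4 * (1/2:ℝ)^(sf t)) := by
    simp only [sf]
    have : Summable (fun t : ℕ => (1/2:ℝ)^t) :=
      summable_geometric_of_lt_one (by norm_num) (by norm_num)
    exact ((this.mul_left ((4:ℝ) * (1/2)^5)).congr (fun t => by rw [pow_add]; ring))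
  calc volume RR ≤ ∑' t, volume (⋃ k ∈ Finset.range (2^(Lf t)),
        Metric.closedBall (ct t k) (2 * et t)) := measure_iUnion_le _
    _ ≤ ∑' t, ENNReal.ofReal (4 * (1/2:ℝ)^(sf t)) := ENNReal.tsum_le_tsum hstage
    _ = ENNReal.ofReal (∑' t, 4 * (1/2:ℝ)^(sf t)) :=
        (ENNReal.ofReal_tsum_of_nonneg (fun t => by positivity) hsum).symm
    _ ≤ ENNReal.ofReal (1/4) := by
        apply ENNReal.ofReal_le_ofReal
        have heq : ∀ t : ℕ, 4 * (1/2:ℝ)^(sf t) = (1/8) * (1/2)^t := by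
          intro t; simp only [sf]; rw [pow_add]; ring
        rw [tsum_congr heq, tsum_mul_left,
          tsum_geometric_of_lt_one (by norm_num) (by norm_num)]
        norm_num

lemma vol_S_pos : 0 < volume (Icc (0:ℝ) 1 \ RR) := by
  by_contra h
  push_neg at h
  have h0 : volume (Icc (0:ℝ) 1 \ RR) = 0 := le_antisymm h zero_le
  have hsub : Icc (0:ℝ) 1 ⊆ (Icc (0:ℝ) 1 \ RR) ∪ RR := by
    intro y hy
    by_cases hR : y ∈ RR
    · exact Or.inr hR
    · exact Or.inl ⟨hy, hR⟩
  have h1 : (1:ℝ≥0∞) ≤ volume ((Icc (0:ℝ) 1 \ RR) ∪ RR) := by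
    have : volume (Icc (0:ℝ) 1) = 1 := by simp
    rw [← this]
    exact measure_mono hsub
  have h2 : volume ((Icc (0:ℝ) 1 \ RR) ∪ RR) ≤ volume (Icc (0:ℝ) 1 \ RR) + volume RR :=
    measure_union_le _ _
  rw [h0, zero_add] at *
  have h3 : (1:ℝ≥0∞) ≤ ENNReal.ofReal (1/4) := le_trans h1 (le_trans h2 vol_RR)
  have h4 : ENNReal.ofReal (1/4:ℝ) < 1 := ENNReal.ofReal_lt_one.mpr (by norm_num)
  exact absurd h3 (not_le.mpr h4)

/-- every point of `[0,1]` is within `rt t` of some stage-`t` center -/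
lemma cover (x : ℝ) (hx : x ∈ Icc (0:ℝ) 1) (t : ℕ) :
    ∃ k < 2^(Lf t), |x - ct t k| ≤ rt t := by
  obtain ⟨hx0, hx1⟩ := hx
  set N : ℕ := 2^(Lf t) with hN
  have hN1 : 1 ≤ N := Nat.one_le_two_pow
  have hNr : (0:ℝ) < (N:ℝ) := by positivity
  set k : ℕ := min (⌊x * N⌋).toNat (N - 1) with hk
  have hkN : k < N := by omega
  refine ⟨k, hkN, ?_⟩
  have hxl : (k:ℝ) ≤ x * N := by
    have h1 : (k:ℕ) ≤ (⌊x * N⌋).toNat := min_le_left _ _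
    have h2 : ((⌊x * N⌋).toNat : ℝ) ≤ x * N := by
      have hnn : (0:ℝ) ≤ x * N := by positivity
      have := Int.floor_le (x * N)
      have h3 : (0:ℤ) ≤ ⌊x * N⌋ := Int.floor_nonneg.mpr hnn
      have h4 : ((⌊x * N⌋).toNat : ℝ) = (⌊x * N⌋ : ℝ) := by
        exact_mod_cast congrArg (Int.cast : ℤ → ℝ) (Int.toNat_of_nonneg h3)
      rw [h4]
      exact this
    calc (k:ℝ) ≤ ((⌊x * N⌋).toNat : ℝ) := by exact_mod_cast h1
      _ ≤ x * N := h2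
  have hxu : x * N ≤ (k:ℝ) + 1 := by
    rcases le_or_gt (⌊x * N⌋).toNat (N - 1) with h | h
    · have hkk : k = (⌊x * N⌋).toNat := by omega
      have h3 : (0:ℤ) ≤ ⌊x * N⌋ := Int.floor_nonneg.mpr (by positivity)
      have := Int.lt_floor_add_one (x * N)
      rw [hkk]
      have h4 : ((⌊x * N⌋).toNat : ℝ) = (⌊x * N⌋ : ℝ) := by
        exact_mod_cast congrArg (Int.cast : ℤ → ℝ) (Int.toNat_of_nonneg h3)
      rw [h4]
      linarith
    · have hkk : k = N - 1 := by omega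
      rw [hkk]
      have : ((N - 1 : ℕ) : ℝ) = (N:ℝ) - 1 := by
        have : (1:ℕ) ≤ N := hN1
        push_cast [this]
        ring
      rw [this]
      nlinarith
  -- now conclude
  have he0 : (0:ℝ) < (1/2:ℝ)^(Lf t + 1) := by positivity
  have heN : (1/2:ℝ)^(Lf t + 1) * (2 * N) = 1 := by
    rw [hN]
    push_cast
    calc (1/2:ℝ)^(Lf t + 1) * (2 * 2^(Lf t)) = ((1/2:ℝ)*2)^(Lf t + 1) := by
          rw [mul_pow, pow_succ]; ring
      _ = 1 := by norm_num
  rw [ct, rt, abs_le]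
  constructor
  · nlinarith [mul_le_mul_of_nonneg_right hxl he0.le]
  · nlinarith [mul_le_mul_of_nonneg_right hxu he0.le]

lemma mem_slimsup {X : Type*} {A : ℕ → Set X} {x : X} :
    x ∈ slimsup A ↔ ∀ n, ∃ i, n ≤ i ∧ x ∈ A i := by
  simp [slimsup]

lemma S_subset :
    Icc (0:ℝ) 1 \ RR ⊆ slimsup (fun i => Icc (xc i - rad i) (xc i + rad i)) := by
  intro x hx
  obtain ⟨hx01, hxR⟩ := hx
  rw [mem_slimsup]
  intro n
  obtain ⟨k, hk, hnear⟩ := cover x hx01 n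
  have hInc : Inc n k := by
    by_cases hk0 : k = 0
    · exact Or.inl hk0
    · right
      intro u hu k' hk' hre
      by_contra hle
      push_neg at hle
      apply hxR
      rw [RR, mem_iUnion]
      refine ⟨u, ?_⟩
      rw [mem_iUnion₂]
      refine ⟨k', Finset.mem_range.mpr hk', ?_⟩
      rw [Metric.mem_closedBall, Real.dist_eq]
      calc |x - ct u k'| ≤ |x - ct n k| + |ct n k - ct u k'| := abs_sub_le _ _ _
        _ ≤ rt n + et u := add_le_add hnear hle
        _ ≤ 2 * et u := by linarith
  refine ⟨Ot n + k, le_trans (self_le_Ot n) (Nat.le_add_right _ _), ?_⟩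
  have hst : st (Ot n + k) = n := st_Ot_add n k hk
  have hkt : kt (Ot n + k) = k := kt_Ot_add n k hk
  have hxc : xc (Ot n + k) = ct n k := by
    rw [xc, hst, hkt, if_pos hInc]
  have hrad : rad (Ot n + k) = rt n := by rw [rad, hst]
  rw [hxc, hrad]
  have := abs_le.mp hnear
  exact ⟨by linarith [this.1], by linarith [this.2]⟩

lemma interval_sub (i : ℕ) :
    Icc (xc i - rad i) (xc i + rad i) ⊆ Icc (0:ℝ) 1 := by
  obtain ⟨k, hk, hck⟩ := goodc_center (xc_good i)
  apply Icc_subset_Icc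
  · rw [hck, ct, rad, rt]
    nlinarith [pow_pos (by norm_num : (0:ℝ) < 1/2) (Lf (st i) + 1),
      (by positivity : (0:ℝ) ≤ (k:ℝ))]
  · rw [hck, ct, rad, rt]
    have hkr : (k:ℝ) + 1 ≤ (2:ℝ)^(Lf (st i)) := by
      have : k + 1 ≤ 2^(Lf (st i)) := hk
      exact_mod_cast this
    have h1 : (2:ℝ)^(Lf (st i) + 1) * (1/2)^(Lf (st i) + 1) = 1 := by
      rw [← mul_pow]; norm_num
    have h2 : (0:ℝ) < (1/2:ℝ)^(Lf (st i) + 1) := by positivity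
    have h3 : (2*(k:ℝ)+2) ≤ (2:ℝ)^(Lf (st i)+1) := by
      rw [pow_succ]
      nlinarith
    nlinarith [mul_le_mul_of_nonneg_right h3 h2.le, h1]

lemma E_empty {a : ℝ} (ha : 1 < a) :
    slimsup (fun i => Icc (xc i - (2 * rad i)^a/2) (xc i + (2 * rad i)^a/2)) = ∅ := by
  rw [eq_empty_iff_forall_notMem]
  intro x hx
  rw [mem_slimsup] at hx
  set M := ⌈2/(a-1)⌉₊ with hM
  have hq : ∀ t, M ≤ t → (sf t:ℝ) + 1 ≤ (Lf t:ℝ) * (a-1) := by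
    intro t ht
    have h1 : (2/(a-1) : ℝ) ≤ M := Nat.le_ceil _
    have h2 : (M:ℝ) ≤ t := by exact_mod_cast ht
    have ha1 : (0:ℝ) < a - 1 := by linarith
    have h3 : 2 ≤ (t:ℝ) * (a-1) := by
      rw [div_le_iff₀ ha1] at h1
      nlinarith
    simp only [sf, Lf]
    push_cast
    nlinarith [h3, ha1, (by positivity : (0:ℝ) ≤ (t:ℝ))]
  obtain ⟨i₁, hi₁, hxi₁⟩ := hx (Ot M)
  obtain ⟨i₂, hi₂, hxi₂⟩ := hx (Ot (st i₁ + 1))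
  have ht₁ : M ≤ st i₁ := st_ge _ _ hi₁
  have ht₂ : st i₁ + 1 ≤ st i₂ := st_ge _ _ hi₂
  have hxe₁ : |x - xc i₁| ≤ (2 * rt (st i₁))^a / 2 := by
    have h := hxi₁
    rw [mem_Icc] at h
    rw [abs_le]
    have hr : rad i₁ = rt (st i₁) := rfl
    rw [hr] at h
    exact ⟨by linarith [h.1], by linarith [h.2]⟩
  have hxe₂ : |x - xc i₂| ≤ (2 * rt (st i₂))^a / 2 := by
    have h := hxi₂
    rw [mem_Icc] at h
    rw [abs_le]
    have hr : rad i₂ = rt (st i₂) := rfl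
    rw [hr] at h
    exact ⟨by linarith [h.1], by linarith [h.2]⟩
  exact key ha (by omega : st i₁ < st i₂) (hq _ ht₁) (xc_good i₁) (xc_good i₂) hxe₁ hxe₂

end PMNS

/-- **Example showing full measure cannot be relaxed to positive measure.**
There is a countable family of non-degenerate closed intervals `B_i ⊆ [0,1]` with
`λ(limsup B_i) > 0`, such that for every `a > 1`, letting `E_i` be the closed interval
with the same center as `B_i` and length `(diam B_i)^a`, one has `limsup E_i = ∅`. -/
theorem positive_measure_not_sufficient :
    ∃ (x ρ : ℕ → ℝ), (∀ i, 0 < ρ i) ∧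
      (∀ i, Set.Icc (x i - ρ i) (x i + ρ i) ⊆ Set.Icc (0 : ℝ) 1) ∧
      0 < volume (slimsup fun i => Set.Icc (x i - ρ i) (x i + ρ i)) ∧
      ∀ a : ℝ, 1 < a →
        slimsup (fun i =>
          Set.Icc (x i - (2 * ρ i) ^ a / 2) (x i + (2 * ρ i) ^ a / 2)) = ∅ := by
  refine ⟨PMNS.xc, PMNS.rad, fun i => PMNS.rt_pos _, fun i => PMNS.interval_sub i, ?_, ?_⟩
  · exact lt_of_lt_of_le PMNS.vol_S_pos (measure_mono PMNS.S_subset)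
  · intro a ha
    exact PMNS.E_empty ha
end

section
/- Let s ∈ [0,d) and set m = ⌊s⌋. There exist constants 0 < c ≤ C, depending only on d and s, such that for every open ellipsoid E ⊆ ℝ^d with semiaxes α_1 ≥ α_2 ≥ … ≥ α_d > 0 one has c · α_1 α_2 ⋯ α_m · α_{m+1}^{s−m} ≤ φ^s(E) ≤ C · α_1 α_2 ⋯ α_m · α_{m+1}^{s−m}, i.e. φ^s(E) agrees with Falconer's singular value function up to multiplicative constants. -/
open MeasureTheory Metric Set Filter ENNReal

lemma coord_abs_le_dist {d : ℕ} (x y : EuclideanSpace ℝ (Fin d)) (j : Fin d) :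
    |x j - y j| ≤ dist x y := by
  rw [EuclideanSpace.dist_eq]
  have h1 : |x j - y j| = Real.sqrt (dist (x j) (y j) ^ 2) := by
    rw [Real.sqrt_sq_eq_abs, Real.dist_eq, abs_abs]
  rw [h1]
  apply Real.sqrt_le_sqrt
  exact Finset.single_le_sum (f := fun i => dist (x i) (y i) ^ 2)
    (fun i _ => sq_nonneg _) (Finset.mem_univ j)

lemma card_filter_fin_lt {d m : ℕ} (hmd : m ≤ d) :
    (Finset.univ.filter fun j : Fin d => (j : ℕ) < m).card = m := by
  have : (Finset.univ.filter fun j : Fin d => (j : ℕ) < m) =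
      (Finset.range m).attachFin (fun i hi => lt_of_lt_of_le (Finset.mem_range.1 hi) hmd) := by
    ext j
    simp [Finset.mem_attachFin]
  rw [this, Finset.card_attachFin, Finset.card_range]


lemma key_real {d : ℕ} (m : ℕ) (hmd : m < d) (s : ℝ) (hms : (m : ℝ) ≤ s) (hsm : s < m + 1)
    (β : Fin d → ℝ) (hβ : ∀ j, 0 < β j) (r : ℝ) (hr : 0 < r) :
    (∏ j, min (r / β j) 1) *
      ((∏ j ∈ Finset.univ.filter fun j : Fin d => (j : ℕ) < m, β j) * β ⟨m, hmd⟩ ^ (s - m)) ≤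
      r ^ s := by
  set A := β ⟨m, hmd⟩ with hA
  have hA0 : 0 < A := hβ _
  have hminnn : ∀ j, 0 ≤ min (r / β j) 1 := fun j => le_min (div_nonneg hr.le (hβ j).le) one_pos.le
  set F := Finset.univ.filter fun j : Fin d => (j : ℕ) < m with hF
  have hsplit : (∏ j, min (r / β j) 1) ≤ (∏ j ∈ F, min (r / β j) 1) * min (r / A) 1 := by
    rw [← Finset.prod_filter_mul_prod_filter_not Finset.univ (fun j : Fin d => (j : ℕ) < m)]
    refine mul_le_mul_of_nonneg_left ?_ (Finset.prod_nonneg fun j _ => hminnn j)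
    have hmem : (⟨m, hmd⟩ : Fin d) ∈ Finset.univ.filter fun j : Fin d => ¬ (j : ℕ) < m := by
      simp
    rw [← Finset.mul_prod_erase _ _ hmem]
    calc min (r / A) 1 * ∏ j ∈ _, min (r / β j) 1
        ≤ min (r / A) 1 * 1 := by
          refine mul_le_mul_of_nonneg_left ?_ (hminnn _)
          exact Finset.prod_le_one (fun j _ => hminnn j) (fun j _ => min_le_right _ _)
      _ = min (r / A) 1 := mul_one _
  have hminA : min (r / A) 1 ≤ (r / A) ^ (s - m) := by
    rcases le_total (r / A) 1 with h | h
    · rw [min_eq_left h]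
      calc r / A = (r / A) ^ (1 : ℝ) := (Real.rpow_one _).symm
        _ ≤ (r / A) ^ (s - m) := by
          apply Real.rpow_le_rpow_of_exponent_ge (by positivity) h
          linarith
    · rw [min_eq_right h]
      apply Real.one_le_rpow h (by linarith)
  have hprod : (∏ j ∈ F, min (r / β j) 1) * (∏ j ∈ F, β j) ≤ r ^ (m : ℕ) := by
    rw [← Finset.prod_mul_distrib, ← card_filter_fin_lt hmd.le, ← hF, ← Finset.prod_const]
    refine Finset.prod_le_prod (fun j _ => mul_nonneg (hminnn j) (hβ j).le) fun j _ => ?_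
    calc min (r / β j) 1 * β j ≤ (r / β j) * β j :=
          mul_le_mul_of_nonneg_right (min_le_left _ _) (hβ j).le
      _ = r := div_mul_cancel₀ _ (hβ j).ne'
  calc (∏ j, min (r / β j) 1) * ((∏ j ∈ F, β j) * A ^ (s - m))
      ≤ ((∏ j ∈ F, min (r / β j) 1) * min (r / A) 1) * ((∏ j ∈ F, β j) * A ^ (s - m)) := by
        exact mul_le_mul_of_nonneg_right hsplit
          (mul_nonneg (Finset.prod_nonneg fun j _ => (hβ j).le) (Real.rpow_nonneg hA0.le _))
    _ = ((∏ j ∈ F, min (r / β j) 1) * (∏ j ∈ F, β j)) * (min (r / A) 1 * A ^ (s - m)) := by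
        ring
    _ ≤ r ^ (m : ℕ) * ((r / A) ^ (s - m) * A ^ (s - m)) := by
        refine mul_le_mul hprod (mul_le_mul_of_nonneg_right hminA (by positivity)) ?_ (by positivity)
        positivity
    _ = r ^ (m : ℕ) * r ^ (s - m) := by
        rw [← Real.mul_rpow (by positivity) hA0.le, div_mul_cancel₀ _ hA0.ne']
    _ = r ^ s := by
        rw [← Real.rpow_natCast r m, ← Real.rpow_add hr]
        ring_nf

lemma phi_le_phi_image {d : ℕ} (s : ℝ) (e : EuclideanSpace ℝ (Fin d) ≃ᵢ EuclideanSpace ℝ (Fin d))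
    (A : Set (EuclideanSpace ℝ (Fin d))) : phi s A ≤ phi s (e '' A) := by
  rw [phi, phi]
  refine iSup_le fun μ => iSup_le fun hμ => iSup_le fun hA => ?_
  have hem : ⇑(e.toHomeomorph.toMeasurableEquiv) = ⇑e := rfl
  set ν := μ.map e with hν
  have hmap : ∀ S : Set (EuclideanSpace ℝ (Fin d)), ν S = μ (e ⁻¹' S) := by
    intro S
    rw [hν, ← hem, MeasurableEquiv.map_apply, hem]
  haveI : IsProbabilityMeasure ν :=
    Measure.isProbabilityMeasure_map (e.continuous.measurable.aemeasurable)
  have hnull : ν (e '' A)ᶜ = 0 := by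
    rw [hmap, Set.preimage_compl, e.injective.preimage_image, hA]
  have hball : ∀ (x : EuclideanSpace ℝ (Fin d)) (r : ℝ),
      ν (closedBall (e x) r) = μ (closedBall x r) := by
    intro x r
    rw [hmap, e.preimage_closedBall, e.symm_apply_apply]
  refine le_iSup_of_le ν ?_
  rw [iSup_pos ‹IsProbabilityMeasure ν›, iSup_pos hnull]
  refine le_iInf fun y => le_iInf fun hy => le_iInf fun r => le_iInf fun hr => ?_
  obtain ⟨x, hx, rfl⟩ := hy
  rw [hball]
  exact iInf_le_of_le x (iInf_le_of_le hx (iInf_le_of_le r (iInf_le_of_le hr le_rfl)))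

lemma phi_image_eq {d : ℕ} (s : ℝ) (e : EuclideanSpace ℝ (Fin d) ≃ᵢ EuclideanSpace ℝ (Fin d))
    (A : Set (EuclideanSpace ℝ (Fin d))) : phi s (e '' A) = phi s A := by
  refine le_antisymm ?_ (phi_le_phi_image s e A)
  have h := phi_le_phi_image s e.symm (e '' A)
  rwa [← Set.image_comp, e.symm_comp_self, Set.image_id] at h

lemma phi_lower {d : ℕ} (m : ℕ) (hmd : m < d) (s : ℝ) (hms : (m : ℝ) ≤ s) (hsm : s < m + 1)
    (α : Fin d → ℝ) (hα : ∀ j, 0 < α j) :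
    ENNReal.ofReal ((Real.sqrt d ^ (-s)) *
        ((∏ j ∈ Finset.univ.filter fun j : Fin d => (j : ℕ) < m, α j) *
          α ⟨m, hmd⟩ ^ (s - m))) ≤
      phi s {w : EuclideanSpace ℝ (Fin d) | ∑ j, (w j / α j) ^ 2 < 1} := by
  have hd0 : 0 < d := lt_of_le_of_lt (Nat.zero_le m) hmd
  set E := {w : EuclideanSpace ℝ (Fin d) | ∑ j, (w j / α j) ^ 2 < 1} with hEdef
  set D := Real.sqrt d with hDdef
  have hD : 0 < D := Real.sqrt_pos.2 (by exact_mod_cast hd0)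
  set β := fun j => α j / D with hβdef
  have hβ : ∀ j, 0 < β j := fun j => div_pos (hα j) hD
  set em := (MeasurableEquiv.toLp 2 (Fin d → ℝ)).symm with hemdef
  have hem_apply : ∀ (w : EuclideanSpace ℝ (Fin d)) (j : Fin d), em w j = w j := fun _ _ => rfl
  set B := em ⁻¹' (Set.pi Set.univ fun j => Ioo (-β j) (β j)) with hBdef
  have hBmeas : MeasurableSet B :=
    (MeasurableSet.univ_pi fun j => measurableSet_Ioo).preimage em.measurable
  have hmemB : ∀ w, w ∈ B ↔ ∀ j, -β j < w j ∧ w j < β j := by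
    intro w
    simp [hBdef, Set.mem_pi, hem_apply]
  -- B ⊆ E
  have hBE : B ⊆ E := by
    intro w hw
    rw [hmemB] at hw
    have h1 : ∀ j, (w j / α j) ^ 2 < 1 / d := by
      intro j
      have hsq : (w j) ^ 2 < (β j) ^ 2 := sq_lt_sq' (hw j).1 (hw j).2
      have hβsq : (β j) ^ 2 = (α j) ^ 2 / d := by
        rw [hβdef]
        simp only []
        rw [div_pow, hDdef, Real.sq_sqrt (by positivity : (0:ℝ) ≤ (d:ℝ))]
      have : (w j / α j) ^ 2 < ((α j) ^ 2 / d) / (α j) ^ 2 := by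
        rw [div_pow]
        exact div_lt_div_of_pos_right (hβsq ▸ hsq) (pow_pos (hα j) 2)
      calc (w j / α j) ^ 2 < ((α j) ^ 2 / d) / (α j) ^ 2 := this
        _ = 1 / d := by
            rw [div_right_comm, div_self (pow_ne_zero 2 (hα j).ne')]
    have : ∑ j, (w j / α j) ^ 2 < ∑ _j : Fin d, (1 : ℝ) / d := by
      haveI : Nonempty (Fin d) := ⟨⟨0, hd0⟩⟩
      exact Finset.sum_lt_sum_of_nonempty Finset.univ_nonempty fun j _ => h1 j
    rw [hEdef]
    simp only [Set.mem_setOf_eq]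
    calc ∑ j, (w j / α j) ^ 2 < ∑ _j : Fin d, (1 : ℝ) / d := this
      _ = 1 := by
          rw [Finset.sum_const, Finset.card_univ, Fintype.card_fin, nsmul_eq_mul]
          field_simp
  -- volume of B
  have hvolB : volume B = ENNReal.ofReal (∏ j, 2 * β j) := by
    rw [hBdef, (EuclideanSpace.volume_preserving_symm_measurableEquiv_toLp (Fin d)).measure_preimage
      ((MeasurableSet.univ_pi fun j => measurableSet_Ioo).nullMeasurableSet),
      volume_pi_pi, ENNReal.ofReal_prod_of_nonneg (fun j _ => by have := hβ j; linarith)]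
    congr 1
    ext j
    rw [Real.volume_Ioo]
    congr 1
    ring
  have hvolB_pos : 0 < ∏ j, 2 * β j :=
    Finset.prod_pos fun j _ => by have := hβ j; linarith
  set μ := (volume B)⁻¹ • volume.restrict B with hμdef
  have hμ_apply : ∀ S, μ S = (volume B)⁻¹ * volume (S ∩ B) := by
    intro S
    rw [hμdef, Measure.smul_apply, Measure.restrict_apply' hBmeas, smul_eq_mul]
  have hprob : IsProbabilityMeasure μ := by
    constructor
    rw [hμ_apply, Set.univ_inter, hvolB]
    exact ENNReal.inv_mul_cancel (ENNReal.ofReal_pos.2 hvolB_pos).ne' ENNReal.ofReal_ne_top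
  have hnull : μ Eᶜ = 0 := by
    rw [hμ_apply]
    have : Eᶜ ∩ B = ∅ := by
      rw [Set.eq_empty_iff_forall_notMem]
      rintro w ⟨hwc, hwB⟩
      exact hwc (hBE hwB)
    rw [this, measure_empty, mul_zero]
  -- ball estimate
  have hball : ∀ (x : EuclideanSpace ℝ (Fin d)) (r : ℝ), 0 < r →
      μ (closedBall x r) ≤ ENNReal.ofReal (∏ j, min (r / β j) 1) := by
    intro x r hr
    rw [hμ_apply]
    have hsub : closedBall x r ∩ B ⊆
        em ⁻¹' (Set.pi Set.univ fun j => Icc (x j - r) (x j + r) ∩ Ioo (-β j) (β j)) := by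
      rintro y ⟨hy1, hy2⟩
      rw [hmemB] at hy2
      intro j _
      rw [hem_apply]
      refine ⟨?_, (hy2 j).1, (hy2 j).2⟩
      have := coord_abs_le_dist y x j
      have hd : dist y x ≤ r := mem_closedBall.1 hy1
      have habs : |y j - x j| ≤ r := le_trans this hd
      rw [abs_le] at habs
      constructor <;> [linarith [habs.1]; linarith [habs.2]]
    have hmono : volume (closedBall x r ∩ B) ≤
        ENNReal.ofReal (∏ j, min (2 * r) (2 * β j)) := by
      calc volume (closedBall x r ∩ B)
          ≤ volume (em ⁻¹' (Set.pi Set.univ fun j =>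
              Icc (x j - r) (x j + r) ∩ Ioo (-β j) (β j))) := measure_mono hsub
        _ = ∏ j, volume (Icc (x j - r) (x j + r) ∩ Ioo (-β j) (β j)) := by
            rw [(EuclideanSpace.volume_preserving_symm_measurableEquiv_toLp (Fin d)).measure_preimage
              ((MeasurableSet.univ_pi fun j =>
                (measurableSet_Icc.inter measurableSet_Ioo)).nullMeasurableSet),
              volume_pi_pi]
        _ ≤ ∏ j, ENNReal.ofReal (min (2 * r) (2 * β j)) := by
            refine Finset.prod_le_prod' fun j _ => ?_
            have h1 : volume (Icc (x j - r) (x j + r) ∩ Ioo (-β j) (β j)) ≤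
                ENNReal.ofReal (2 * r) := by
              calc volume (Icc (x j - r) (x j + r) ∩ Ioo (-β j) (β j))
                  ≤ volume (Icc (x j - r) (x j + r)) := measure_mono Set.inter_subset_left
                _ = ENNReal.ofReal (2 * r) := by rw [Real.volume_Icc]; congr 1; ring
            have h2 : volume (Icc (x j - r) (x j + r) ∩ Ioo (-β j) (β j)) ≤
                ENNReal.ofReal (2 * β j) := by
              calc volume (Icc (x j - r) (x j + r) ∩ Ioo (-β j) (β j))
                  ≤ volume (Ioo (-β j) (β j)) := measure_mono Set.inter_subset_right
                _ = ENNReal.ofReal (2 * β j) := by rw [Real.volume_Ioo]; congr 1; ring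
            rcases le_total (2 * r) (2 * β j) with h | h
            · rw [min_eq_left h]; exact h1
            · rw [min_eq_right h]; exact h2
        _ = ENNReal.ofReal (∏ j, min (2 * r) (2 * β j)) := by
            rw [ENNReal.ofReal_prod_of_nonneg fun j _ =>
              le_min (by positivity) (by have := hβ j; linarith)]
    calc (volume B)⁻¹ * volume (closedBall x r ∩ B)
        ≤ (volume B)⁻¹ * ENNReal.ofReal (∏ j, min (2 * r) (2 * β j)) :=
          mul_le_mul_right hmono _
      _ = ENNReal.ofReal (∏ j, min (2 * r) (2 * β j)) / ENNReal.ofReal (∏ j, 2 * β j) := by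
          rw [hvolB, div_eq_mul_inv, mul_comm]
      _ = ENNReal.ofReal ((∏ j, min (2 * r) (2 * β j)) / (∏ j, 2 * β j)) :=
          (ENNReal.ofReal_div_of_pos hvolB_pos).symm
      _ = ENNReal.ofReal (∏ j, min (r / β j) 1) := by
          congr 1
          rw [← Finset.prod_div_distrib]
          refine Finset.prod_congr rfl fun j _ => ?_
          rcases le_total r (β j) with h | h
          · rw [min_eq_left (by linarith), min_eq_left ((div_le_one (hβ j)).2 h),
              mul_div_mul_left _ _ (two_ne_zero)]
          · rw [min_eq_right (by linarith), min_eq_right ((one_le_div (hβ j)).2 h),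
              div_self (by have := hβ j; positivity)]
  -- conclude
  haveI := hprob
  rw [phi]
  refine le_iSup_of_le μ ?_
  rw [iSup_pos hprob, iSup_pos hnull]
  refine le_iInf fun x => le_iInf fun _hx => le_iInf fun r => le_iInf fun hr => ?_
  rw [ENNReal.le_div_iff_mul_le
    (Or.inr (ENNReal.ofReal_pos.2 (Real.rpow_pos_of_pos hr s)).ne')
    (Or.inl (measure_ne_top μ _))]
  have hΦnn : 0 ≤ (Real.sqrt d ^ (-s)) *
      ((∏ j ∈ Finset.univ.filter fun j : Fin d => (j : ℕ) < m, α j) *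
        α ⟨m, hmd⟩ ^ (s - m)) := by
    apply mul_nonneg (Real.rpow_nonneg (Real.sqrt_nonneg _) _)
    exact mul_nonneg (Finset.prod_nonneg fun j _ => (hα j).le)
      (Real.rpow_nonneg (hα _).le _)
  have hid : (Real.sqrt d ^ (-s)) *
      ((∏ j ∈ Finset.univ.filter fun j : Fin d => (j : ℕ) < m, α j) *
        α ⟨m, hmd⟩ ^ (s - m)) =
      (∏ j ∈ Finset.univ.filter fun j : Fin d => (j : ℕ) < m, β j) *
        β ⟨m, hmd⟩ ^ (s - m) := by
    have hDm : (D : ℝ) ^ (m : ℕ) * D ^ (s - m) = D ^ s := by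
      rw [← Real.rpow_natCast, ← Real.rpow_add hD]
      ring_nf
    have hβprod : (∏ j ∈ Finset.univ.filter fun j : Fin d => (j : ℕ) < m, β j) =
        (∏ j ∈ Finset.univ.filter fun j : Fin d => (j : ℕ) < m, α j) / D ^ (m : ℕ) := by
      rw [hβdef]
      rw [Finset.prod_div_distrib, Finset.prod_const, card_filter_fin_lt hmd.le]
    have hβm : β ⟨m, hmd⟩ ^ (s - m) = α ⟨m, hmd⟩ ^ (s - m) / D ^ (s - m) :=
      Real.div_rpow (hα ⟨m, hmd⟩).le hD.le (s - m)
    rw [hβprod, hβm, ← hDdef, Real.rpow_neg hD.le, ← hDm]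
    have h1 : (D : ℝ) ^ (m : ℕ) ≠ 0 := pow_ne_zero _ hD.ne'
    have h2 : D ^ (s - m) ≠ 0 := (Real.rpow_pos_of_pos hD _).ne'
    field_simp
  calc ENNReal.ofReal _ * μ (closedBall x r)
      ≤ ENNReal.ofReal _ * ENNReal.ofReal (∏ j, min (r / β j) 1) :=
        mul_le_mul_right (hball x r hr) _
    _ = ENNReal.ofReal (((Real.sqrt d ^ (-s)) *
          ((∏ j ∈ Finset.univ.filter fun j : Fin d => (j : ℕ) < m, α j) *
            α ⟨m, hmd⟩ ^ (s - m))) * ∏ j, min (r / β j) 1) :=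
        (ENNReal.ofReal_mul hΦnn).symm
    _ ≤ ENNReal.ofReal (r ^ s) := by
        apply ENNReal.ofReal_le_ofReal
        rw [hid, mul_comm]
        exact key_real m hmd s hms hsm β hβ r hr

lemma phi_upper {d : ℕ} (m : ℕ) (hmd : m < d) (s : ℝ) (hms : (m : ℝ) ≤ s) (hsm : s < m + 1)
    (α : Fin d → ℝ) (hα : ∀ j, 0 < α j) (hαa : Antitone α) :
    phi s {w : EuclideanSpace ℝ (Fin d) | ∑ j, (w j / α j) ^ 2 < 1} ≤
      ENNReal.ofReal (((2 * Real.sqrt d) ^ s * 3 ^ d) *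
        ((∏ j ∈ Finset.univ.filter fun j : Fin d => (j : ℕ) < m, α j) *
          α ⟨m, hmd⟩ ^ (s - m))) := by
  have hd0 : 0 < d := lt_of_le_of_lt (Nat.zero_le m) hmd
  have hs0 : 0 ≤ s := le_trans (by positivity) hms
  set E := {w : EuclideanSpace ℝ (Fin d) | ∑ j, (w j / α j) ^ 2 < 1} with hEdef
  set ρ := α ⟨m, hmd⟩ with hρdef
  have hρ : 0 < ρ := hα _
  set P := ∏ j ∈ Finset.univ.filter fun j : Fin d => (j : ℕ) < m, α j with hPdef
  have hP : 0 < P := Finset.prod_pos fun j _ => hα j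
  set h := 2 * ρ with hhdef
  have hh : 0 < h := by positivity
  have hD : 0 < Real.sqrt d := Real.sqrt_pos.2 (by exact_mod_cast hd0)
  set a : Fin d → ℤ := fun j => ⌊-α j / h⌋ - 1 with hadef
  set b : Fin d → ℤ := fun j => ⌈α j / h⌉ with hbdef
  set K := Fintype.piFinset (fun j => Finset.Ioo (a j) (b j)) with hKdef
  set g : EuclideanSpace ℝ (Fin d) → (Fin d → ℤ) := fun x j => ⌊x j / h⌋ with hgdef
  -- all coordinates of points of E are bounded
  have hcoord : ∀ x ∈ E, ∀ j, |x j| < α j := by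
    intro x hx j
    have h1 : (x j / α j) ^ 2 < 1 := by
      have hle : (x j / α j) ^ 2 ≤ ∑ i, (x i / α i) ^ 2 :=
        Finset.single_le_sum (f := fun i => (x i / α i) ^ 2)
          (fun i _ => sq_nonneg _) (Finset.mem_univ j)
      exact lt_of_le_of_lt hle hx
    have h2 : (x j) ^ 2 < (α j) ^ 2 := by
      rw [div_pow, div_lt_one (pow_pos (hα j) 2)] at h1
      exact h1
    by_contra hcon
    push_neg at hcon
    have : (α j) ^ 2 ≤ (x j) ^ 2 := by
      calc (α j) ^ 2 ≤ |x j| ^ 2 := pow_le_pow_left₀ (hα j).le hcon 2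
        _ = (x j) ^ 2 := sq_abs _
    linarith
  -- covering: the grid index of any point of E lies in K
  have hcover : ∀ x ∈ E, g x ∈ K := by
    intro x hx
    rw [hKdef, Fintype.mem_piFinset]
    intro j
    rw [Finset.mem_Ioo]
    have habs := hcoord x hx j
    rw [abs_lt] at habs
    constructor
    · -- a j < ⌊x j / h⌋
      have h1 : (⌊-α j / h⌋ : ℤ) ≤ ⌊x j / h⌋ :=
        Int.floor_le_floor ((div_le_div_iff_of_pos_right hh).2 habs.1.le)
      have h2 : a j = ⌊-α j / h⌋ - 1 := rfl
      have h3 : g x j = ⌊x j / h⌋ := rfl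
      omega
    · -- ⌊x j / h⌋ < b j
      have h1 : (⌊x j / h⌋ : ℝ) < (b j : ℝ) := by
        calc (⌊x j / h⌋ : ℝ) ≤ x j / h := Int.floor_le _
          _ < α j / h := div_lt_div_of_pos_right habs.2 hh
          _ ≤ (b j : ℝ) := Int.le_ceil _
      exact_mod_cast h1
  -- cardinality bound
  have hcard_le : ((K.card : ℕ) : ℝ) ≤ ∏ j, (α j / ρ + 2) := by
    rw [hKdef, Fintype.card_piFinset]
    push_cast
    refine Finset.prod_le_prod (fun j _ => Nat.cast_nonneg _) fun j _ => ?_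
    rw [Int.card_Ioo]
    have hble : (b j : ℝ) < α j / h + 1 := Int.ceil_lt_add_one _
    have hage : -α j / h - 1 < (⌊-α j / h⌋ : ℝ) := Int.sub_one_lt_floor _
    have hz : ((b j - a j - 1 : ℤ) : ℝ) ≤ α j / ρ + 2 := by
      have h2 : (a j : ℝ) = (⌊-α j / h⌋ : ℝ) - 1 := by
        rw [hadef]; push_cast; ring
      have h3 : α j / h + α j / h = α j / ρ := by
        rw [hhdef]; field_simp; ring
      have h4 : -α j / h = -(α j / h) := by ring
      push_cast
      linarith [hage, hble, h2, h3, h4]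
    have h5 : ((b j - a j - 1).toNat : ℝ) = max ((b j - a j - 1 : ℤ) : ℝ) 0 := by
      rw [← Int.cast_natCast, Int.toNat_eq_max]
      push_cast
      rfl
    rw [h5]
    exact max_le hz (add_nonneg (div_nonneg (hα j).le hρ.le) (by norm_num))
  have hmaxb : ∏ j, (α j / ρ + 2) ≤ 3 ^ d * (P * ρ ^ (d - m)) / ρ ^ d := by
    have hstep : ∀ j : Fin d, α j / ρ + 2 ≤ 3 * max (α j) ρ / ρ := by
      intro j
      rcases le_total (α j) ρ with hc | hc
      · rw [max_eq_right hc]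
        have : α j / ρ ≤ 1 := (div_le_one hρ).2 hc
        have h3 : 3 * ρ / ρ = 3 := by field_simp
        rw [h3]; linarith
      · rw [max_eq_left hc]
        have : 1 ≤ α j / ρ := (one_le_div hρ).2 hc
        have : 3 * α j / ρ = 3 * (α j / ρ) := by ring
        rw [this]; nlinarith [(one_le_div hρ).2 hc]
    calc ∏ j, (α j / ρ + 2) ≤ ∏ j : Fin d, 3 * max (α j) ρ / ρ :=
          Finset.prod_le_prod
            (fun j _ => add_nonneg (div_nonneg (hα j).le hρ.le) (by norm_num))
            fun j _ => hstep j
      _ = 3 ^ d * (∏ j, max (α j) ρ) / ρ ^ d := by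
          rw [Finset.prod_div_distrib, Finset.prod_mul_distrib]
          simp [Finset.prod_const, Finset.card_univ]
      _ = 3 ^ d * (P * ρ ^ (d - m)) / ρ ^ d := by
          congr 2
          rw [← Finset.prod_filter_mul_prod_filter_not Finset.univ
            (fun j : Fin d => (j : ℕ) < m) (fun j => max (α j) ρ), hPdef]
          congr 1
          · refine Finset.prod_congr rfl fun j hj => ?_
            rw [Finset.mem_filter] at hj
            refine max_eq_left (hαa ?_)
            exact le_of_lt hj.2
          · rw [Finset.prod_congr rfl (fun j hj => ?_), Finset.prod_const]
            · congr 1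
              have := Finset.card_filter_add_card_filter_not
                (s := (Finset.univ : Finset (Fin d))) (p := fun j : Fin d => (j : ℕ) < m)
              rw [card_filter_fin_lt hmd.le, Finset.card_univ, Fintype.card_fin] at this
              omega
            · rw [Finset.mem_filter] at hj
              refine max_eq_right (hαa ?_)
              have : m ≤ (j : ℕ) := Nat.le_of_not_lt hj.2
              exact this
  -- final real bound
  set r := (2 * Real.sqrt d) * ρ with hrdef
  have hr : 0 < r := by positivity
  have hfinal : r ^ s * K.card ≤ ((2 * Real.sqrt d) ^ s * 3 ^ d) * (P * ρ ^ (s - m)) := by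
    have hrs : r ^ s = (2 * Real.sqrt d) ^ s * ρ ^ s := Real.mul_rpow (by positivity) hρ.le
    have hchain : (K.card : ℝ) ≤ 3 ^ d * (P * ρ ^ (d - m)) / ρ ^ d :=
      le_trans hcard_le hmaxb
    have hρpow : ρ ^ s * (3 ^ d * (P * ρ ^ (d - m)) / ρ ^ d) =
        3 ^ d * (P * ρ ^ (s - m)) := by
      rw [← Real.rpow_natCast ρ (d - m), ← Real.rpow_natCast ρ d,
        Nat.cast_sub hmd.le]
      rw [div_eq_mul_inv, ← Real.rpow_neg hρ.le]
      have : ρ ^ s * (3 ^ d * (P * ρ ^ ((d : ℝ) - m)) * ρ ^ (-(d : ℝ))) =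
          3 ^ d * P * (ρ ^ s * ρ ^ ((d : ℝ) - m) * ρ ^ (-(d : ℝ))) := by ring
      rw [this, ← Real.rpow_add hρ, ← Real.rpow_add hρ]
      ring_nf
    calc r ^ s * K.card = (2 * Real.sqrt d) ^ s * (ρ ^ s * K.card) := by
          rw [hrs]; ring
      _ ≤ (2 * Real.sqrt d) ^ s * (ρ ^ s * (3 ^ d * (P * ρ ^ (d - m)) / ρ ^ d)) := by
          refine mul_le_mul_of_nonneg_left ?_ (Real.rpow_nonneg (by positivity) _)
          exact mul_le_mul_of_nonneg_left hchain (Real.rpow_nonneg hρ.le _)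
      _ = ((2 * Real.sqrt d) ^ s * 3 ^ d) * (P * ρ ^ (s - m)) := by
          rw [hρpow]; ring
  -- now the measure-theoretic part
  rw [phi]
  refine iSup_le fun μ => iSup_le fun hμ => iSup_le fun hnull => ?_
  haveI := hμ
  have hEmeas : MeasurableSet E := by
    have : IsOpen E := by
      have hc : Continuous fun w : EuclideanSpace ℝ (Fin d) => ∑ j, (w j / α j) ^ 2 := by
        refine continuous_finset_sum _ fun j _ => ?_
        exact ((show Continuous fun w : EuclideanSpace ℝ (Fin d) => w j by fun_prop).div_const _).pow 2
      exact isOpen_lt hc continuous_const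
    exact this.measurableSet
  have hμE : μ E = 1 := by
    have h2 : μ Set.univ ≤ μ E + μ Eᶜ := by
      rw [← Set.union_compl_self E]
      exact measure_union_le _ _
    rw [hnull, add_zero, measure_univ] at h2
    exact le_antisymm prob_le_one h2
  have hsum : (1 : ℝ≥0∞) ≤ ∑ k ∈ K, μ (g ⁻¹' {k} ∩ E) := by
    have hsub : E ⊆ ⋃ k ∈ K, (g ⁻¹' {k} ∩ E) := by
      intro x hx
      exact Set.mem_biUnion (hcover x hx) ⟨rfl, hx⟩
    calc (1 : ℝ≥0∞) = μ E := hμE.symm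
      _ ≤ μ (⋃ k ∈ K, (g ⁻¹' {k} ∩ E)) := measure_mono hsub
      _ ≤ ∑ k ∈ K, μ (g ⁻¹' {k} ∩ E) := measure_biUnion_finset_le _ _
  have hKne : K.Nonempty := by
    rcases Finset.eq_empty_or_nonempty K with hE0 | hne
    · rw [hE0, Finset.sum_empty] at hsum
      exact absurd hsum (by simp)
    · exact hne
  obtain ⟨k, hkK, hkmax⟩ := Finset.exists_max_image K (fun k => μ (g ⁻¹' {k} ∩ E)) hKne
  have h1 : (1 : ℝ≥0∞) ≤ (K.card : ℝ≥0∞) * μ (g ⁻¹' {k} ∩ E) := by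
    calc (1 : ℝ≥0∞) ≤ ∑ k' ∈ K, μ (g ⁻¹' {k'} ∩ E) := hsum
      _ ≤ K.card • μ (g ⁻¹' {k} ∩ E) :=
          Finset.sum_le_card_nsmul _ _ _ fun k' hk' => hkmax k' hk'
      _ = (K.card : ℝ≥0∞) * μ (g ⁻¹' {k} ∩ E) := by rw [nsmul_eq_mul]
  have hk0 : μ (g ⁻¹' {k} ∩ E) ≠ 0 := by
    intro hzero
    rw [hzero, mul_zero] at h1
    exact absurd h1 (by simp)
  obtain ⟨x, hxc, hxE⟩ := nonempty_of_measure_ne_zero hk0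
  have hcell_sub : g ⁻¹' {k} ∩ E ⊆ closedBall x r := by
    rintro y ⟨hyc, _⟩
    have hyx : ∀ j, |y j - x j| ≤ h := by
      intro j
      have hy : ⌊y j / h⌋ = k j := congrFun hyc j
      have hx' : ⌊x j / h⌋ = k j := congrFun hxc j
      have hy1 : (k j : ℝ) ≤ y j / h := by rw [← hy]; exact Int.floor_le _
      have hy2 : y j / h < k j + 1 := by rw [← hy]; exact Int.lt_floor_add_one _
      have hx1 : (k j : ℝ) ≤ x j / h := by rw [← hx']; exact Int.floor_le _
      have hx2 : x j / h < k j + 1 := by rw [← hx']; exact Int.lt_floor_add_one _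
      have : |y j / h - x j / h| ≤ 1 := by
        rw [abs_le]; constructor <;> [linarith; linarith]
      have hfs : y j - x j = h * (y j / h - x j / h) := by field_simp
      rw [hfs, abs_mul, abs_of_pos hh]
      calc h * |y j / h - x j / h| ≤ h * 1 := by
            exact mul_le_mul_of_nonneg_left this hh.le
        _ = h := mul_one _
    rw [mem_closedBall, EuclideanSpace.dist_eq]
    have hsumsq : ∑ j, dist (y j) (x j) ^ 2 ≤ (d : ℝ) * h ^ 2 := by
      calc ∑ j, dist (y j) (x j) ^ 2 ≤ ∑ _j : Fin d, h ^ 2 := by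
            refine Finset.sum_le_sum fun j _ => ?_
            rw [Real.dist_eq]
            exact pow_le_pow_left₀ (abs_nonneg _) (hyx j) 2
        _ = (d : ℝ) * h ^ 2 := by
            rw [Finset.sum_const, Finset.card_univ, Fintype.card_fin, nsmul_eq_mul]
    calc Real.sqrt (∑ j, dist (y j) (x j) ^ 2) ≤ Real.sqrt ((d : ℝ) * h ^ 2) :=
          Real.sqrt_le_sqrt hsumsq
      _ = Real.sqrt d * h := by
          rw [Real.sqrt_mul (by positivity), Real.sqrt_sq hh.le]
      _ = r := by rw [hrdef, hhdef]; ring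
  refine le_trans (iInf_le_of_le x (iInf_le_of_le hxE
    (iInf_le_of_le r (iInf_le_of_le hr le_rfl)))) ?_
  calc ENNReal.ofReal (r ^ s) / μ (closedBall x r)
      ≤ ENNReal.ofReal (r ^ s) / μ (g ⁻¹' {k} ∩ E) :=
        ENNReal.div_le_div_left (measure_mono hcell_sub) _
    _ ≤ ENNReal.ofReal (((2 * Real.sqrt d) ^ s * 3 ^ d) * (P * ρ ^ (s - m))) := by
        rw [ENNReal.div_le_iff hk0 (measure_ne_top μ _)]
        calc ENNReal.ofReal (r ^ s) = ENNReal.ofReal (r ^ s) * 1 := (mul_one _).symm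
          _ ≤ ENNReal.ofReal (r ^ s) * ((K.card : ℝ≥0∞) * μ (g ⁻¹' {k} ∩ E)) :=
              mul_le_mul_right h1 _
          _ = (ENNReal.ofReal (r ^ s) * (K.card : ℝ≥0∞)) * μ (g ⁻¹' {k} ∩ E) := by ring
          _ ≤ ENNReal.ofReal (((2 * Real.sqrt d) ^ s * 3 ^ d) * (P * ρ ^ (s - m))) *
              μ (g ⁻¹' {k} ∩ E) := by
              refine mul_le_mul_left ?_ _
              rw [← ENNReal.ofReal_natCast K.card, ← ENNReal.ofReal_mul (by positivity)]
              exact ENNReal.ofReal_le_ofReal hfinal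

/-- **`φ^s` generalizes Falconer's singular value function.** For `s ∈ [0,d)`,
`m = ⌊s⌋`, there are constants `0 < c ≤ C` depending only on `d` and `s` such that for
every open ellipsoid `E ⊆ ℝ^d` with semiaxes `α_1 ≥ … ≥ α_d > 0`,
`c·α_1⋯α_m·α_{m+1}^{s-m} ≤ φ^s(E) ≤ C·α_1⋯α_m·α_{m+1}^{s-m}`. -/
theorem phi_comparable_falconer_singular_value_function
    (d : ℕ) (s : ℝ) (hs0 : 0 ≤ s) (hsd : s < (d : ℝ)) :
    ∃ c C : ℝ, 0 < c ∧ c ≤ C ∧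
      ∀ (z : EuclideanSpace ℝ (Fin d)) (u : Fin d → EuclideanSpace ℝ (Fin d)),
        Orthonormal ℝ u →
        ∀ α : Fin d → ℝ, (∀ j, 0 < α j) → Antitone α →
          ∀ E : Set (EuclideanSpace ℝ (Fin d)),
            E = {y | ∑ j : Fin d, ((inner ℝ (y - z) (u j) : ℝ) / α j) ^ 2 < 1} →
            ENNReal.ofReal (c *
                ((∏ j ∈ Finset.univ.filter fun j : Fin d => (j : ℕ) < ⌊s⌋₊, α j) *
                  α ⟨⌊s⌋₊, (Nat.floor_lt hs0).2 hsd⟩ ^ (s - (⌊s⌋₊ : ℝ)))) ≤ phi s E ∧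
            phi s E ≤ ENNReal.ofReal (C *
                ((∏ j ∈ Finset.univ.filter fun j : Fin d => (j : ℕ) < ⌊s⌋₊, α j) *
                  α ⟨⌊s⌋₊, (Nat.floor_lt hs0).2 hsd⟩ ^ (s - (⌊s⌋₊ : ℝ)))) := by
  have hmd : ⌊s⌋₊ < d := (Nat.floor_lt hs0).2 hsd
  have hd0 : 0 < d := lt_of_le_of_lt (Nat.zero_le _) hmd
  have hd1 : (1 : ℝ) ≤ d := by exact_mod_cast hd0
  have hD1 : (1 : ℝ) ≤ Real.sqrt d := by
    rw [show (1 : ℝ) = Real.sqrt 1 from (Real.sqrt_one).symm]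
    exact Real.sqrt_le_sqrt hd1
  have hD : (0 : ℝ) < Real.sqrt d := lt_of_lt_of_le one_pos hD1
  refine ⟨Real.sqrt d ^ (-s), (2 * Real.sqrt d) ^ s * 3 ^ d, Real.rpow_pos_of_pos hD _, ?_, ?_⟩
  · calc Real.sqrt d ^ (-s) ≤ 1 :=
          Real.rpow_le_one_of_one_le_of_nonpos hD1 (by linarith)
      _ ≤ (2 * Real.sqrt d) ^ s * 3 ^ d := by
          have h1 : (1 : ℝ) ≤ (2 * Real.sqrt d) ^ s := Real.one_le_rpow (by linarith) hs0
          have h2 : (1 : ℝ) ≤ (3 : ℝ) ^ d := one_le_pow₀ (by norm_num)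
          nlinarith
  intro z u hu α hα hαa E hE
  have hms : ((⌊s⌋₊ : ℕ) : ℝ) ≤ s := Nat.floor_le hs0
  have hsm : s < (⌊s⌋₊ : ℝ) + 1 := Nat.lt_floor_add_one s
  -- build the isometry sending E onto a standard ellipsoid
  haveI : Nonempty (Fin d) := ⟨⟨0, hd0⟩⟩
  have hcard : Fintype.card (Fin d) = Module.finrank ℝ (EuclideanSpace ℝ (Fin d)) := by
    rw [Fintype.card_fin, finrank_euclideanSpace_fin]
  set bas := basisOfLinearIndependentOfCardEqFinrank hu.linearIndependent hcard with hbasdef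
  have hbas : ⇑bas = u := coe_basisOfLinearIndependentOfCardEqFinrank _ _
  have hbon : Orthonormal ℝ ⇑bas := by rw [hbas]; exact hu
  set ob : OrthonormalBasis (Fin d) ℝ (EuclideanSpace ℝ (Fin d)) :=
    bas.toOrthonormalBasis hbon with hobdef
  have hob : ∀ j, ob j = u j := by
    intro j
    have h1 : ⇑ob = ⇑bas := by
      rw [hobdef]; exact Module.Basis.coe_toOrthonormalBasis bas hbon
    rw [congrFun h1 j, hbas]
  set e : EuclideanSpace ℝ (Fin d) ≃ᵢ EuclideanSpace ℝ (Fin d) :=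
    (IsometryEquiv.subRight z).trans ob.repr.toIsometryEquiv with hedef
  have hecoord : ∀ (y : EuclideanSpace ℝ (Fin d)) (j : Fin d),
      e y j = (inner ℝ (y - z) (u j) : ℝ) := by
    intro y j
    have h1 : e y = ob.repr (y - z) := rfl
    rw [h1, OrthonormalBasis.repr_apply_apply, hob, real_inner_comm]
  have himg : e '' E = {w : EuclideanSpace ℝ (Fin d) | ∑ j, (w j / α j) ^ 2 < 1} := by
    ext w
    constructor
    · rintro ⟨y, hy, rfl⟩
      rw [hE] at hy
      simp only [Set.mem_setOf_eq] at hy ⊢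
      calc ∑ j, (e y j / α j) ^ 2
          = ∑ j, ((inner ℝ (y - z) (u j) : ℝ) / α j) ^ 2 :=
            Finset.sum_congr rfl fun j _ => by rw [hecoord]
        _ < 1 := hy
    · intro hw
      refine ⟨e.symm w, ?_, e.apply_symm_apply w⟩
      rw [hE]
      simp only [Set.mem_setOf_eq] at hw ⊢
      calc ∑ j, ((inner ℝ (e.symm w - z) (u j) : ℝ) / α j) ^ 2
          = ∑ j, (e (e.symm w) j / α j) ^ 2 :=
            Finset.sum_congr rfl fun j _ => by rw [hecoord]
        _ = ∑ j, (w j / α j) ^ 2 :=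
            Finset.sum_congr rfl fun j _ => by rw [e.apply_symm_apply]
        _ < 1 := hw
  have hphiE : phi s E = phi s {w : EuclideanSpace ℝ (Fin d) | ∑ j, (w j / α j) ^ 2 < 1} := by
    rw [← himg, phi_image_eq]
  rw [hphiE]
  exact ⟨phi_lower ⌊s⌋₊ hmd s hms hsm α hα,
    phi_upper ⌊s⌋₊ hmd s hms hsm α hα hαa⟩
end
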